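/- arXiv:2205.01453 — 10 statements merged into one kernel-verified Lean document; each statement's English description precedes it below -/
import Mathlib

section
/- Let $n \ge 1$ be a positive integer and let $a_1, \ldots, a_n$ be real numbers. If a real number $x$ satisfies $x^n \le \sum_{i=1}^{n} a_i x^{n-i}$, then $x \le 2 \max_{1 \le i \le n} |a_i|^{1/i}$. -/
lemma geom_sum_Icc (n : ℕ) : ∑ i ∈ Finset.Icc 1 n, ((1:ℝ)/2)^i = 1 - (1/2)^n := by
  induction n with
  | zero => simp
  | succ m ih =>
    rw [Finset.sum_Icc_succ_top (by omega : 1 ≤ m + 1), ih]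
    ring

theorem root_bound (n : ℕ) (hn : 1 ≤ n) (a : ℕ → ℝ) (x : ℝ)
    (hx : x ^ n ≤ ∑ i ∈ Finset.Icc 1 n, a i * x ^ (n - i)) :
    x ≤ 2 * (Finset.Icc 1 n).sup' (Finset.nonempty_Icc.mpr hn)
      (fun i => |a i| ^ ((1 : ℝ) / (i : ℝ))) := by
  by_contra h
  push_neg at h
  set ne := Finset.nonempty_Icc.mpr hn
  set M := (Finset.Icc 1 n).sup' ne (fun i => |a i| ^ ((1 : ℝ) / (i : ℝ))) with hM
  have hM0 : 0 ≤ M := by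
    have := Finset.le_sup' (fun i => |a i| ^ ((1 : ℝ) / (i : ℝ)))
      (Finset.mem_Icc.mpr ⟨le_refl 1, hn⟩)
    exact le_trans (Real.rpow_nonneg (abs_nonneg _) _) this
  have hx0 : 0 < x := lt_of_le_of_lt (by linarith) h
  have key : ∀ i ∈ Finset.Icc 1 n, a i * x ^ (n - i) ≤ x ^ n * (1/2)^i := by
    intro i hi
    obtain ⟨hi1, hin⟩ := Finset.mem_Icc.mp hi
    have hMi : |a i| ≤ M ^ i := by
      have hle : |a i| ^ ((1 : ℝ) / (i : ℝ)) ≤ M := Finset.le_sup' (fun i => |a i| ^ ((1 : ℝ) / (i : ℝ))) hi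
      have hipos : (0:ℝ) < i := by exact_mod_cast hi1
      have : (|a i| ^ ((1 : ℝ) / (i : ℝ))) ^ i ≤ M ^ i :=
        pow_le_pow_left₀ (Real.rpow_nonneg (abs_nonneg _) _) hle i
      rwa [← Real.rpow_natCast (|a i| ^ ((1 : ℝ) / (i : ℝ))) i,
        ← Real.rpow_mul (abs_nonneg _), one_div, inv_mul_cancel₀ (ne_of_gt hipos),
        Real.rpow_one] at this
    have hxp : (0:ℝ) ≤ x ^ (n - i) := le_of_lt (pow_pos hx0 _)
    have h1 : a i * x ^ (n - i) ≤ |a i| * x ^ (n - i) :=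
      mul_le_mul_of_nonneg_right (le_abs_self _) hxp
    have h2 : |a i| * x ^ (n - i) ≤ (x/2)^i * x ^ (n - i) := by
      apply mul_le_mul_of_nonneg_right _ hxp
      refine hMi.trans (pow_le_pow_left₀ hM0 (by linarith) i)
    have h3 : (x/2)^i * x ^ (n - i) = x ^ n * (1/2)^i := by
      rw [div_pow, div_pow, one_pow]
      rw [div_mul_eq_mul_div, mul_div_assoc, ← mul_div_assoc, mul_comm (x^i),
        ← pow_add, Nat.sub_add_cancel hin]
      ring
    linarith
  have hsum : ∑ i ∈ Finset.Icc 1 n, a i * x ^ (n - i)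
      ≤ x ^ n * (1 - (1/2)^n) := by
    calc ∑ i ∈ Finset.Icc 1 n, a i * x ^ (n - i)
        ≤ ∑ i ∈ Finset.Icc 1 n, x ^ n * (1/2)^i := Finset.sum_le_sum key
      _ = x ^ n * (1 - (1/2)^n) := by rw [← Finset.mul_sum, geom_sum_Icc]
  have hxn : 0 < x ^ n := pow_pos hx0 n
  have hp : (0:ℝ) < (1/2)^n := pow_pos (by norm_num) n
  nlinarith
end

section
/- Let $(a_i)_{i \in [n]}$ and $(b_i)_{i \in [n]}$ be sequences of positive reals with $a_i / b_i \ge 1$ for all $i$. Then $\sum_{i \in [n]} a_i / \log(e^2 a_i / b_i) \le (\sum_{i \in [n]} a_i) / \log(e^2 \sum_{i \in [n]} a_i / \sum_{i \in [n]} b_i)$, where $\log$ is the natural logarithm and $n \ge 1$. -/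
open Real Finset

lemma hasDerivAtF {x : ℝ} (hx : 1 < x) :
    HasDerivAt (fun r : ℝ => r / (2 + Real.log r))
      ((1 + Real.log x) / (2 + Real.log x) ^ 2) x := by
  have hx0 : x ≠ 0 := by positivity
  have hlog : 0 < Real.log x := Real.log_pos hx
  have hden : 2 + Real.log x ≠ 0 := by positivity
  have h1 : HasDerivAt (fun r : ℝ => 2 + Real.log r) x⁻¹ x := by
    simpa using (Real.hasDerivAt_log hx0).const_add 2
  have h2 := (hasDerivAt_id x).div h1 hden
  refine h2.congr_deriv ?_
  simp only [id, one_mul, mul_inv_cancel₀ hx0]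
  ring

lemma concaveF : ConcaveOn ℝ (Set.Ici (1 : ℝ)) (fun r => r / (2 + Real.log r)) := by
  have hanti : AntitoneOn (deriv (fun r : ℝ => r / (2 + Real.log r)))
      (interior (Set.Ici (1 : ℝ))) := by
    rw [interior_Ici]
    intro x hx y hy hxy
    have hx1 : (1:ℝ) < x := hx
    have hy1 : (1:ℝ) < y := hy
    rw [(hasDerivAtF hx1).deriv, (hasDerivAtF hy1).deriv]
    have hlx : 0 < Real.log x := Real.log_pos hx1
    have hly : 0 < Real.log y := Real.log_pos hy1
    have hlxy : Real.log x ≤ Real.log y := Real.log_le_log (by linarith) hxy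
    rw [div_le_div_iff₀ (by positivity) (by positivity)]
    nlinarith [sq_nonneg (Real.log y - Real.log x), mul_nonneg hlx.le hly.le]
  apply hanti.concaveOn_of_deriv (convex_Ici 1)
  · apply ContinuousOn.div continuousOn_id
    · exact continuousOn_const.add (Real.continuousOn_log.mono
        (fun x hx => by simp; intro h; rw [h] at hx; exact absurd hx (by norm_num)))
    · intro x hx
      have : 0 ≤ Real.log x := Real.log_nonneg hx
      positivity
  · intro x hx
    rw [interior_Ici] at hx
    exact (hasDerivAtF hx).differentiableAt.differentiableWithinAt

theorem sum_div_log_le (n : ℕ) (hn : 1 ≤ n) (a b : ℕ → ℝ)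
    (ha : ∀ i < n, 0 < a i) (hb : ∀ i < n, 0 < b i)
    (hab : ∀ i < n, 1 ≤ a i / b i) :
    ∑ i ∈ Finset.range n, a i / Real.log (Real.exp 2 * a i / b i) ≤
      (∑ i ∈ Finset.range n, a i) /
        Real.log (Real.exp 2 * (∑ i ∈ Finset.range n, a i) / ∑ i ∈ Finset.range n, b i) := by
  set A := ∑ i ∈ Finset.range n, a i with hA
  set B := ∑ i ∈ Finset.range n, b i with hB
  have hne : (Finset.range n).Nonempty := ⟨0, Finset.mem_range.mpr hn⟩
  have hApos : 0 < A := Finset.sum_pos (fun i hi => ha i (Finset.mem_range.mp hi)) hne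
  have hBpos : 0 < B := Finset.sum_pos (fun i hi => hb i (Finset.mem_range.mp hi)) hne
  have hBA : B ≤ A := by
    apply Finset.sum_le_sum
    intro i hi
    have hbi := hb i (Finset.mem_range.mp hi)
    have := hab i (Finset.mem_range.mp hi)
    rw [le_div_iff₀ hbi] at this
    linarith
  have hAB1 : (1:ℝ) ≤ A / B := (one_le_div hBpos).mpr hBA
  -- Jensen
  have key := concaveF.le_map_sum (t := Finset.range n) (w := fun i => b i / B)
    (p := fun i => a i / b i)
    (fun i hi => div_nonneg (hb i (Finset.mem_range.mp hi)).le hBpos.le)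
    (by rw [← Finset.sum_div]; field_simp; exact hB.symm)
    (fun i hi => hab i (Finset.mem_range.mp hi))
  have hsum : ∑ i ∈ Finset.range n, (fun i => b i / B) i • (fun i => a i / b i) i = A / B := by
    rw [hA, Finset.sum_div]
    apply Finset.sum_congr rfl
    intro i hi
    have hbi := (hb i (Finset.mem_range.mp hi)).ne'
    simp only [smul_eq_mul]
    field_simp
  rw [hsum] at key
  have hlhs : ∑ i ∈ Finset.range n, (fun i => b i / B) i •
      (fun r => r / (2 + Real.log r)) ((fun i => a i / b i) i) =
      (∑ i ∈ Finset.range n, a i / Real.log (Real.exp 2 * a i / b i)) / B := by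
    rw [Finset.sum_div]
    apply Finset.sum_congr rfl
    intro i hi
    have hai := ha i (Finset.mem_range.mp hi)
    have hbi := hb i (Finset.mem_range.mp hi)
    have hr1 : (1:ℝ) ≤ a i / b i := hab i (Finset.mem_range.mp hi)
    have hlog : Real.log (Real.exp 2 * a i / b i) = 2 + Real.log (a i / b i) := by
      rw [mul_div_assoc, Real.log_mul (Real.exp_ne_zero 2) (by positivity), Real.log_exp]
    have hlr : 0 ≤ Real.log (a i / b i) := Real.log_nonneg hr1
    rw [hlog]
    have hden : (0:ℝ) < 2 + Real.log (a i / b i) := by linarith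
    simp only [smul_eq_mul]
    field_simp
  rw [hlhs] at key
  have hrlog : Real.log (Real.exp 2 * A / B) = 2 + Real.log (A / B) := by
    rw [mul_div_assoc, Real.log_mul (Real.exp_ne_zero 2) (by positivity), Real.log_exp]
  rw [hrlog]
  have hlogAB : 0 ≤ Real.log (A / B) := Real.log_nonneg hAB1
  have hdenAB : (0:ℝ) < 2 + Real.log (A / B) := by linarith
  have := mul_le_mul_of_nonneg_right key hBpos.le
  rw [div_mul_cancel₀ _ hBpos.ne'] at this
  calc ∑ i ∈ Finset.range n, a i / Real.log (Real.exp 2 * a i / b i)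
      ≤ A / B / (2 + Real.log (A / B)) * B := this
    _ = A / (2 + Real.log (A / B)) := by field_simp
end

section
/- For every positive integer $n$, $n! \le e \sqrt{n} (n/e)^n$. -/
theorem factorial_le_stirling (n : ℕ) (hn : 1 ≤ n) :
    (n.factorial : ℝ) ≤ Real.exp 1 * Real.sqrt n * ((n : ℝ) / Real.exp 1) ^ n := by
  obtain ⟨m, rfl⟩ := Nat.exists_eq_add_of_le hn
  have h := Stirling.stirlingSeq'_antitone (Nat.zero_le m)
  simp only [Function.comp, Nat.succ_eq_add_one, zero_add] at h
  rw [Stirling.stirlingSeq_one] at h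
  set k : ℕ := 1 + m with hk
  have hk1 : (1 : ℝ) ≤ (k : ℝ) := by exact_mod_cast Nat.le_add_right 1 m
  have hkpos : (0 : ℝ) < k := lt_of_lt_of_le one_pos hk1
  have hden : (0 : ℝ) < Real.sqrt (2 * k) * ((k : ℝ) / Real.exp 1) ^ k := by
    positivity
  have h2 : Stirling.stirlingSeq (m + 1) = Stirling.stirlingSeq k := by
    rw [hk, Nat.add_comm]
  rw [h2] at h
  have h3 : (k.factorial : ℝ) ≤ Real.exp 1 / Real.sqrt 2 *
      (Real.sqrt (2 * k) * ((k : ℝ) / Real.exp 1) ^ k) := by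
    have := (div_le_iff₀ hden).mp h
    simpa [Stirling.stirlingSeq] using this
  refine h3.trans (le_of_eq ?_)
  rw [Real.sqrt_mul (by norm_num : (0:ℝ) ≤ 2)]
  have hs2 : Real.sqrt 2 ≠ 0 := by positivity
  field_simp
end

section
/- Let $(\varepsilon_i)_{i \in [n]}$ be independent Rademacher random variables (each uniform on $\{-1, 1\}$) and let $(a_i)_{i \in [n]}$ be real numbers. Then for all $p \ge 2$, $(E[|\sum_{i \in [n]} a_i \varepsilon_i|^p])^{1/p} \le \sqrt{p} \cdot \sqrt{e \sum_{i \in [n]} a_i^2}$. -/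
open MeasureTheory ProbabilityTheory ENNReal

lemma my_integrable_dirac {f : ℝ → ℝ} (hf : Measurable f) (x : ℝ) :
    Integrable f (Measure.dirac x) := by
  refine ⟨hf.aestronglyMeasurable, ?_⟩
  rw [HasFiniteIntegral, lintegral_dirac]
  exact ENNReal.coe_lt_top

lemma my_integrable_two_point {f : ℝ → ℝ} (hf : Measurable f) :
    Integrable f ((1/2 : ENNReal) • Measure.dirac (1:ℝ) + (1/2 : ENNReal) • Measure.dirac (-1:ℝ)) :=
  ((my_integrable_dirac hf 1).smul_measure (by norm_num)).add_measure
    ((my_integrable_dirac hf (-1)).smul_measure (by norm_num))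

lemma my_integral_two_point {f : ℝ → ℝ} (hf : Measurable f) :
    ∫ x, f x ∂((1/2 : ENNReal) • Measure.dirac (1:ℝ) + (1/2 : ENNReal) • Measure.dirac (-1:ℝ))
      = (f 1 + f (-1)) / 2 := by
  rw [integral_add_measure ((my_integrable_dirac hf 1).smul_measure (by norm_num))
    ((my_integrable_dirac hf (-1)).smul_measure (by norm_num)),
    integral_smul_measure, integral_smul_measure, integral_dirac, integral_dirac]
  rw [ENNReal.toReal_div]
  norm_num
  ring

lemma my_key_bound (x t p : ℝ) (ht : 0 < t) (hp : 0 < p) :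
    |x| ^ p ≤ (p / (Real.exp 1 * t)) ^ p * (Real.exp (t * x) + Real.exp (-(t * x))) := by
  have he : (0:ℝ) < Real.exp 1 := Real.exp_pos 1
  have hc : (0:ℝ) < p / (Real.exp 1 * t) := by positivity
  have h1 : Real.exp (t * |x|) ≤ Real.exp (t * x) + Real.exp (-(t * x)) := by
    rcases abs_cases x with ⟨h, _⟩ | ⟨h, _⟩
    · rw [h]; nlinarith [Real.exp_pos (-(t*x))]
    · rw [h, mul_neg, ← neg_mul]; nlinarith [Real.exp_pos (t*x)]
  have h2 : |x| ^ p ≤ (p / (Real.exp 1 * t)) ^ p * Real.exp (t * |x|) := by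
    have hxc : |x| ≤ (p / (Real.exp 1 * t)) * Real.exp (t * |x| / p) := by
      set u : ℝ := t * |x| / p with hu
      have hu0 : 0 ≤ u := by positivity
      have h3 : u ≤ Real.exp (u - 1) := by linarith [Real.add_one_le_exp (u - 1)]
      have h4 : Real.exp (u - 1) = Real.exp u / Real.exp 1 := by
        rw [Real.exp_sub]
      have hx : |x| = (p / t) * u := by
        rw [hu]; field_simp
      rw [hx]
      calc (p / t) * u ≤ (p / t) * (Real.exp u / Real.exp 1) := by
            rw [← h4]; exact mul_le_mul_of_nonneg_left h3 (by positivity)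
        _ = (p / (Real.exp 1 * t)) * Real.exp u := by field_simp
    calc |x| ^ p ≤ ((p / (Real.exp 1 * t)) * Real.exp (t * |x| / p)) ^ p :=
          Real.rpow_le_rpow (abs_nonneg x) hxc hp.le
      _ = (p / (Real.exp 1 * t)) ^ p * Real.exp (t * |x| / p) ^ p :=
          Real.mul_rpow hc.le (Real.exp_pos _).le
      _ = (p / (Real.exp 1 * t)) ^ p * Real.exp (t * |x|) := by
          rw [← Real.exp_mul]
          congr 1
          field_simp
  calc |x| ^ p ≤ (p / (Real.exp 1 * t)) ^ p * Real.exp (t * |x|) := h2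
    _ ≤ (p / (Real.exp 1 * t)) ^ p * (Real.exp (t * x) + Real.exp (-(t * x))) := by
        exact mul_le_mul_of_nonneg_left h1 (by positivity)

theorem khintchine_rademacher {Ω : Type*} [MeasurableSpace Ω]
    (μ : Measure Ω) [IsProbabilityMeasure μ]
    (n : ℕ) (X : Fin n → Ω → ℝ) (hmeas : ∀ i, Measurable (X i))
    (hindep : iIndepFun X μ)
    (hdist : ∀ i, μ.map (X i) =
      (1 / 2 : ℝ≥0∞) • Measure.dirac (1 : ℝ) + (1 / 2 : ℝ≥0∞) • Measure.dirac (-1 : ℝ))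
    (a : Fin n → ℝ) (p : ℝ) (hp : 2 ≤ p) :
    (∫ ω, |∑ i, a i * X i ω| ^ p ∂μ) ^ (1 / p) ≤
      Real.sqrt p * Real.sqrt (Real.exp 1 * ∑ i, a i ^ 2) := by
  have hp0 : (0:ℝ) < p := by linarith
  have hpne : p ≠ 0 := ne_of_gt hp0
  have hRHS : 0 ≤ Real.sqrt p * Real.sqrt (Real.exp 1 * ∑ i, a i ^ 2) := by positivity
  by_cases hσ : (∑ i, a i ^ 2) = 0
  · have ha : ∀ i, a i = 0 := by
      intro i
      have := (Finset.sum_eq_zero_iff_of_nonneg (fun j _ => sq_nonneg (a j))).mp hσ i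
        (Finset.mem_univ i)
      exact by nlinarith [this, sq_nonneg (a i)]
    have : (∫ ω, |∑ i, a i * X i ω| ^ p ∂μ) = 0 := by
      simp [ha, Real.zero_rpow hpne]
    rw [this, Real.zero_rpow (by simp [hpne])]
    exact hRHS
  · set σ2 : ℝ := ∑ i, a i ^ 2 with hσ2
    have hσ2pos : 0 < σ2 := lt_of_le_of_ne (Finset.sum_nonneg fun j _ => sq_nonneg (a j))
      (Ne.symm hσ)
    set Y : Fin n → Ω → ℝ := fun i ω => a i * X i ω with hY
    have hYmeas : ∀ i, Measurable (Y i) := fun i => (hmeas i).const_mul _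
    have hYindep : iIndepFun Y μ :=
      hindep.comp (fun i x => a i * x) (fun i => measurable_const_mul _)
    -- mgf of each Y i
    have hmgf_i : ∀ i t, mgf (Y i) μ t = Real.cosh (t * a i) := by
      intro i t
      have hg : Measurable (fun x : ℝ => Real.exp (t * (a i * x))) := by fun_prop
      rw [mgf]
      calc (∫ ω, Real.exp (t * Y i ω) ∂μ)
          = ∫ x, Real.exp (t * (a i * x)) ∂(μ.map (X i)) :=
            (integral_map (hmeas i).aemeasurable hg.aestronglyMeasurable).symm
        _ = (Real.exp (t * (a i * 1)) + Real.exp (t * (a i * (-1)))) / 2 := by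
            rw [hdist i]; exact my_integral_two_point hg
        _ = Real.cosh (t * a i) := by
            rw [Real.cosh_eq]; ring_nf
    -- integrability of exp(t * Y i)
    have hint_i : ∀ i (t : ℝ), Integrable (fun ω => Real.exp (t * Y i ω)) μ := by
      intro i t
      have hg : Measurable (fun x : ℝ => Real.exp (t * (a i * x))) := by fun_prop
      have h1 : Integrable (fun x : ℝ => Real.exp (t * (a i * x))) (μ.map (X i)) := by
        rw [hdist i]; exact my_integrable_two_point hg
      exact (integrable_map_measure hg.aestronglyMeasurable (hmeas i).aemeasurable).mp h1
    -- integrability of exp(t * S)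
    have hint : ∀ t : ℝ, Integrable (fun ω => Real.exp (t * ∑ i, a i * X i ω)) μ := by
      intro t
      have := hYindep.integrable_exp_mul_sum (t := t) hYmeas
        (s := Finset.univ) (fun i _ => hint_i i t)
      simpa using this
    -- mgf bound
    have hmgfS : ∀ t : ℝ, mgf (fun ω => ∑ i, a i * X i ω) μ t ≤ Real.exp (t ^ 2 * σ2 / 2) := by
      intro t
      have hsum : (fun ω => ∑ i, a i * X i ω) = ∑ i, Y i := by
        funext ω; simp [hY]
      rw [hsum, hYindep.mgf_sum hYmeas Finset.univ]
      calc ∏ i, mgf (Y i) μ t = ∏ i, Real.cosh (t * a i) := by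
            exact Finset.prod_congr rfl fun i _ => hmgf_i i t
        _ ≤ ∏ i, Real.exp ((t * a i) ^ 2 / 2) := by
            refine Finset.prod_le_prod (fun i _ => (Real.cosh_pos _).le)
              (fun i _ => Real.cosh_le_exp_half_sq _)
        _ = Real.exp (∑ i, (t * a i) ^ 2 / 2) := (Real.exp_sum _ _).symm
        _ = Real.exp (t ^ 2 * σ2 / 2) := by
            congr 1
            rw [hσ2, Finset.mul_sum, Finset.sum_div]
            exact Finset.sum_congr rfl fun i _ => by ring
    -- choose t
    set t : ℝ := Real.sqrt p / Real.sqrt σ2 with htdef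
    have ht : 0 < t := by positivity
    set C : ℝ := (p / (Real.exp 1 * t)) ^ p with hC
    have hC0 : 0 ≤ C := by positivity
    -- integral bound
    have hIb : (∫ ω, |∑ i, a i * X i ω| ^ p ∂μ) ≤ C * (2 * Real.exp (p / 2)) := by
      have hbound : ∀ ω, |∑ i, a i * X i ω| ^ p ≤
          C * (Real.exp (t * ∑ i, a i * X i ω) + Real.exp (-(t * ∑ i, a i * X i ω))) :=
        fun ω => my_key_bound _ t p ht hp0
      have hintb : Integrable (fun ω =>
          C * (Real.exp (t * ∑ i, a i * X i ω) + Real.exp (-(t * ∑ i, a i * X i ω)))) μ := by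
        refine Integrable.const_mul ?_ C
        have h2 := hint (-t)
        simp only [neg_mul] at h2
        exact (hint t).add h2
      calc (∫ ω, |∑ i, a i * X i ω| ^ p ∂μ)
          ≤ ∫ ω, C * (Real.exp (t * ∑ i, a i * X i ω)
              + Real.exp (-(t * ∑ i, a i * X i ω))) ∂μ := by
            refine integral_mono_of_nonneg ?_ hintb ?_
            · exact Filter.Eventually.of_forall fun ω => by positivity
            · exact Filter.Eventually.of_forall hbound
        _ = C * ((∫ ω, Real.exp (t * ∑ i, a i * X i ω) ∂μ)
              + (∫ ω, Real.exp (-(t * ∑ i, a i * X i ω)) ∂μ)) := by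
            rw [integral_const_mul, integral_add (hint t) (by simpa [neg_mul] using hint (-t))]
        _ ≤ C * (Real.exp (t ^ 2 * σ2 / 2) + Real.exp ((-t) ^ 2 * σ2 / 2)) := by
            refine mul_le_mul_of_nonneg_left (add_le_add ?_ ?_) hC0
            · exact hmgfS t
            · have := hmgfS (-t)
              rw [mgf] at this
              simpa [neg_mul] using this
        _ = C * (2 * Real.exp (p / 2)) := by
            have htsq : t ^ 2 * σ2 = p := by
              rw [htdef, div_pow, Real.sq_sqrt hp0.le, Real.sq_sqrt hσ2pos.le]
              field_simp
            rw [neg_sq, htsq]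
            ring
    -- final computation
    have hI0 : 0 ≤ ∫ ω, |∑ i, a i * X i ω| ^ p ∂μ :=
      integral_nonneg fun ω => Real.rpow_nonneg (abs_nonneg _) p
    have hA : 0 ≤ p / (Real.exp 1 * t) := by positivity
    have step1 : (∫ ω, |∑ i, a i * X i ω| ^ p ∂μ) ^ (1/p)
        ≤ (C * (2 * Real.exp (p/2))) ^ (1/p) :=
      Real.rpow_le_rpow hI0 hIb (by positivity)
    have step2 : (C * (2 * Real.exp (p/2))) ^ (1/p)
        = (p / (Real.exp 1 * t)) * ((2:ℝ) ^ (1/p) * Real.exp (1/2)) := by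
      rw [hC, Real.mul_rpow (by positivity) (by positivity),
        ← Real.rpow_mul hA, mul_one_div_cancel hpne, Real.rpow_one,
        Real.mul_rpow (by norm_num) (Real.exp_pos _).le,
        ← Real.exp_mul]
      congr 2
      field_simp
    have hAval : p / (Real.exp 1 * t) = Real.sqrt p * Real.sqrt σ2 / Real.exp 1 := by
      have h1 : (0:ℝ) < Real.sqrt p := Real.sqrt_pos.mpr hp0
      have h2 : (0:ℝ) < Real.sqrt σ2 := Real.sqrt_pos.mpr hσ2pos
      rw [htdef]
      field_simp
      linear_combination (-1:ℝ) * (Real.mul_self_sqrt hp0.le)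
    have h2e : (2:ℝ) ^ (1/p) ≤ Real.exp 1 := by
      have h1 : (2:ℝ) ^ (1/p) ≤ (2:ℝ) ^ (1:ℝ) :=
        Real.rpow_le_rpow_of_exponent_le one_le_two (by rw [div_le_one hp0]; linarith)
      rw [Real.rpow_one] at h1
      have h2 : (2:ℝ) ≤ Real.exp 1 := by
        have := Real.add_one_le_exp 1
        linarith
      linarith
    have hfin : (Real.sqrt p * Real.sqrt σ2 / Real.exp 1) * ((2:ℝ)^(1/p) * Real.exp (1/2))
        ≤ Real.sqrt p * (Real.exp (1/2) * Real.sqrt σ2) := by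
      rw [div_mul_eq_mul_div, div_le_iff₀ (Real.exp_pos 1)]
      nlinarith [h2e, (Real.exp_pos ((1:ℝ)/2)).le, Real.sqrt_nonneg p, Real.sqrt_nonneg σ2,
        mul_nonneg (mul_nonneg (Real.sqrt_nonneg p) (Real.sqrt_nonneg σ2))
          (Real.exp_pos ((1:ℝ)/2)).le,
        Real.rpow_nonneg (by norm_num : (0:ℝ) ≤ 2) (1/p)]
    have hRHSeq : Real.sqrt p * Real.sqrt (Real.exp 1 * σ2)
        = Real.sqrt p * (Real.exp (1/2) * Real.sqrt σ2) := by
      rw [Real.sqrt_mul (Real.exp_pos 1).le]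
      congr 2
      rw [show (1:ℝ)/2 = 1/2 from rfl, Real.exp_half]
    calc (∫ ω, |∑ i, a i * X i ω| ^ p ∂μ) ^ (1/p)
        ≤ (C * (2 * Real.exp (p/2))) ^ (1/p) := step1
      _ = (p / (Real.exp 1 * t)) * ((2:ℝ) ^ (1/p) * Real.exp (1/2)) := step2
      _ = (Real.sqrt p * Real.sqrt σ2 / Real.exp 1) * ((2:ℝ)^(1/p) * Real.exp (1/2)) := by
          rw [hAval]
      _ ≤ Real.sqrt p * (Real.exp (1/2) * Real.sqrt σ2) := hfin
      _ = Real.sqrt p * Real.sqrt (Real.exp 1 * σ2) := hRHSeq.symm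
end

section
/- Let $f : \mathbb{R}_{\ge 0}^n \to \mathbb{R}_{\ge 0}$ be monotonically increasing in every coordinate, and suppose there exist positive reals $(\alpha_i)_{i \in [n]}$ and $(t_i)_{i \in [n]}$ such that for all $\lambda \ge 0$: $f(\lambda^{\alpha_0} t_0, \ldots, \lambda^{\alpha_{n-1}} t_{n-1}) \le \lambda f(t_0, \ldots, t_{n-1})$. Let $(X_i)_{i \in [n]}$ be nonnegative random variables with finite relevant moments. Then for every $p \ge 1$: $\|f(X_0, \ldots, X_{n-1})\|_p \le n^{1/p} \max_{i \in [n]} (\|X_i\|_{p/\alpha_i} / t_i)^{1/\alpha_i} \cdot f(t_0, \ldots, t_{n-1})$. -/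
open MeasureTheory

theorem fn_moment {Ω : Type*} [MeasurableSpace Ω]
    (μ : Measure Ω) [IsProbabilityMeasure μ]
    (n : ℕ) (hn : 0 < n)
    (f : (Fin n → ℝ) → ℝ)
    (hf0 : ∀ x : Fin n → ℝ, (∀ i, 0 ≤ x i) → 0 ≤ f x)
    (hmono : ∀ x y : Fin n → ℝ, (∀ i, 0 ≤ x i) → (∀ i, x i ≤ y i) → f x ≤ f y)
    (α t : Fin n → ℝ) (hα : ∀ i, 0 < α i) (ht : ∀ i, 0 < t i)
    (hhom : ∀ lam : ℝ, 0 ≤ lam → f (fun i => lam ^ (α i) * t i) ≤ lam * f t)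
    (X : Fin n → Ω → ℝ) (hXmeas : ∀ i, Measurable (X i)) (hX : ∀ i ω, 0 ≤ X i ω)
    (p : ℝ) (hp : 1 ≤ p)
    (hint : ∀ i, Integrable (fun ω => X i ω ^ (p / α i)) μ) :
    (∫ ω, f (fun i => X i ω) ^ p ∂μ) ^ (1 / p) ≤
      (n : ℝ) ^ (1 / p) *
        (Finset.univ.sup' ⟨⟨0, hn⟩, Finset.mem_univ _⟩ fun i =>
          ((∫ ω, |X i ω| ^ (p / α i) ∂μ) ^ (α i / p) / t i) ^ (1 / α i)) *
        f t := by
  have hp0 : 0 < p := lt_of_lt_of_le one_pos hp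
  have hft : 0 ≤ f t := hf0 t fun i => (ht i).le
  have habs : ∀ i ω, |X i ω| = X i ω := fun i ω => abs_of_nonneg (hX i ω)
  simp only [habs]
  set g : Fin n → ℝ := fun i =>
    ((∫ ω, X i ω ^ (p / α i) ∂μ) ^ (α i / p) / t i) ^ (1 / α i) with hgdef
  set M : ℝ := Finset.univ.sup' ⟨⟨0, hn⟩, Finset.mem_univ _⟩ g with hMdef
  have hInt0 : ∀ i, 0 ≤ ∫ ω, X i ω ^ (p / α i) ∂μ := fun i =>
    integral_nonneg fun ω => Real.rpow_nonneg (hX i ω) _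
  have hg0 : ∀ i, 0 ≤ g i := fun i =>
    Real.rpow_nonneg (div_nonneg (Real.rpow_nonneg (hInt0 i) _) (ht i).le) _
  have hgM : ∀ i, g i ≤ M := fun i => Finset.le_sup' g (Finset.mem_univ i)
  have hM0 : 0 ≤ M := le_trans (hg0 ⟨0, hn⟩) (hgM ⟨0, hn⟩)
  -- g i ^ p equals the normalized moment
  have hgp : ∀ i, g i ^ p = (∫ ω, X i ω ^ (p / α i) ∂μ) / t i ^ (p / α i) := by
    intro i
    have hA : (0:ℝ) ≤ (∫ ω, X i ω ^ (p / α i) ∂μ) ^ (α i / p) := Real.rpow_nonneg (hInt0 i) _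
    rw [hgdef]
    rw [← Real.rpow_mul (div_nonneg hA (ht i).le)]
    have h1 : 1 / α i * p = p / α i := by ring
    rw [h1, Real.div_rpow hA (ht i).le, ← Real.rpow_mul (hInt0 i)]
    have h2 : α i / p * (p / α i) = 1 := by
      rw [div_mul_div_comm, mul_comm (α i) p]
      exact div_self (mul_ne_zero hp0.ne' (hα i).ne')
    rw [h2, Real.rpow_one]
  -- pointwise bound
  have hpt : ∀ ω, f (fun i => X i ω) ^ p ≤
      f t ^ p * ∑ i, X i ω ^ (p / α i) / t i ^ (p / α i) := by
    intro ω
    have hne : (Finset.univ : Finset (Fin n)).Nonempty := ⟨⟨0, hn⟩, Finset.mem_univ _⟩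
    set lam : ℝ := Finset.univ.sup' hne
      (fun i => (X i ω / t i) ^ (1 / α i)) with hlam
    have hterm0 : ∀ i, (0:ℝ) ≤ (X i ω / t i) ^ (1 / α i) := fun i =>
      Real.rpow_nonneg (div_nonneg (hX i ω) (ht i).le) _
    have hl0 : 0 ≤ lam :=
      le_trans (hterm0 ⟨0, hn⟩) (Finset.le_sup' (fun i => (X i ω / t i) ^ (1 / α i)) (Finset.mem_univ (⟨0, hn⟩ : Fin n)))
    have hXle : ∀ i, X i ω ≤ lam ^ α i * t i := by
      intro i
      have h1 : (X i ω / t i) ^ (1 / α i) ≤ lam :=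
        Finset.le_sup' (fun i => (X i ω / t i) ^ (1 / α i)) (Finset.mem_univ i)
      have h2 : ((X i ω / t i) ^ (1 / α i)) ^ α i ≤ lam ^ α i :=
        Real.rpow_le_rpow (hterm0 i) h1 (hα i).le
      rw [← Real.rpow_mul (div_nonneg (hX i ω) (ht i).le),
        one_div_mul_cancel (hα i).ne', Real.rpow_one] at h2
      calc X i ω = X i ω / t i * t i := (div_mul_cancel₀ _ (ht i).ne').symm
        _ ≤ lam ^ α i * t i := mul_le_mul_of_nonneg_right h2 (ht i).le
    have h3 : f (fun i => X i ω) ≤ lam * f t :=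
      le_trans (hmono _ _ (fun i => hX i ω) hXle) (hhom lam hl0)
    have h4 : f (fun i => X i ω) ^ p ≤ (lam * f t) ^ p :=
      Real.rpow_le_rpow (hf0 _ fun i => hX i ω) h3 hp0.le
    obtain ⟨i₀, -, hi₀⟩ := Finset.exists_mem_eq_sup' hne (fun i => (X i ω / t i) ^ (1 / α i))
    have h5 : lam ^ p = X i₀ ω ^ (p / α i₀) / t i₀ ^ (p / α i₀) := by
      rw [hlam, hi₀, ← Real.rpow_mul (div_nonneg (hX i₀ ω) (ht i₀).le)]
      have : 1 / α i₀ * p = p / α i₀ := by ring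
      rw [this, Real.div_rpow (hX i₀ ω) (ht i₀).le]
    have h6 : lam ^ p ≤ ∑ i, X i ω ^ (p / α i) / t i ^ (p / α i) := by
      rw [h5]
      exact Finset.single_le_sum (f := fun i => X i ω ^ (p / α i) / t i ^ (p / α i)) (fun i _ =>
        div_nonneg (Real.rpow_nonneg (hX i ω) _) (Real.rpow_nonneg (ht i).le _))
        (Finset.mem_univ i₀)
    calc f (fun i => X i ω) ^ p ≤ (lam * f t) ^ p := h4
      _ = lam ^ p * f t ^ p := Real.mul_rpow hl0 hft
      _ ≤ (∑ i, X i ω ^ (p / α i) / t i ^ (p / α i)) * f t ^ p :=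
          mul_le_mul_of_nonneg_right h6 (Real.rpow_nonneg hft _)
      _ = f t ^ p * ∑ i, X i ω ^ (p / α i) / t i ^ (p / α i) := mul_comm _ _
  -- integrability of the dominating function
  have hgint : Integrable
      (fun ω => f t ^ p * ∑ i, X i ω ^ (p / α i) / t i ^ (p / α i)) μ :=
    (integrable_finset_sum _ fun i _ => (hint i).div_const _).const_mul _
  have hle : (∫ ω, f (fun i => X i ω) ^ p ∂μ) ≤
      ∫ ω, f t ^ p * ∑ i, X i ω ^ (p / α i) / t i ^ (p / α i) ∂μ :=
    integral_mono_of_nonneg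
      (Filter.Eventually.of_forall fun ω =>
        Real.rpow_nonneg (hf0 _ fun i => hX i ω) p)
      hgint (Filter.Eventually.of_forall hpt)
  have hcomp : (∫ ω, f t ^ p * ∑ i, X i ω ^ (p / α i) / t i ^ (p / α i) ∂μ)
      ≤ f t ^ p * ((n : ℝ) * M ^ p) := by
    rw [integral_const_mul _ _, integral_finset_sum _ fun i _ => (hint i).div_const _]
    have : ∀ i ∈ Finset.univ, (∫ ω, X i ω ^ (p / α i) / t i ^ (p / α i) ∂μ) ≤ M ^ p := by
      intro i _
      rw [integral_div, ← hgp i]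
      exact Real.rpow_le_rpow (hg0 i) (hgM i) hp0.le
    calc f t ^ p * ∑ i, (∫ ω, X i ω ^ (p / α i) / t i ^ (p / α i) ∂μ)
        ≤ f t ^ p * ∑ _i : Fin n, M ^ p :=
          mul_le_mul_of_nonneg_left (Finset.sum_le_sum this) (Real.rpow_nonneg hft _)
      _ = f t ^ p * ((n : ℝ) * M ^ p) := by
          rw [Finset.sum_const, Finset.card_univ, Fintype.card_fin, nsmul_eq_mul]
  have hI0 : 0 ≤ ∫ ω, f (fun i => X i ω) ^ p ∂μ :=
    integral_nonneg fun ω => Real.rpow_nonneg (hf0 _ fun i => hX i ω) p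
  have hfinal : (∫ ω, f (fun i => X i ω) ^ p ∂μ) ^ (1 / p)
      ≤ (f t ^ p * ((n : ℝ) * M ^ p)) ^ (1 / p) :=
    Real.rpow_le_rpow hI0 (le_trans hle hcomp) (by positivity)
  refine le_trans hfinal (le_of_eq ?_)
  rw [Real.mul_rpow (Real.rpow_nonneg hft _) (by positivity),
    Real.mul_rpow (by positivity) (Real.rpow_nonneg hM0 _),
    ← Real.rpow_mul hft, ← Real.rpow_mul hM0,
    mul_one_div_cancel hp0.ne', Real.rpow_one, Real.rpow_one]
  ring
end

section
/- For $p \ge 2$ and positive reals $M, \sigma$, define $\Psi_p(M, \sigma^2) = (\sigma^2/(p M^2))^{1/p} M$ if $p < \log(p M^2/\sigma^2)$; $\Psi_p(M, \sigma^2) = \frac{1}{2}\sqrt{p}\,\sigma$ if $p < e^2 \sigma^2/M^2$; and $\Psi_p(M, \sigma^2) = \frac{p}{e \log(p M^2/\sigma^2)} M$ if $\max\{\log(p M^2/\sigma^2), e^2 \sigma^2/M^2\} \le p$. Then $\Psi_p(M, \sigma^2) = M \cdot \sup\{ (p/s) (\sigma^2/(p M^2))^{1/s} : 2 \le s \le p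 \}$. -/
private lemma psi_key (L t t' : ℝ) (ht : 0 < t) (ht' : 0 < t')
    (h : (t - t') * (1 / t' - L) ≤ 0) :
    t * Real.exp (-(L * t)) ≤ t' * Real.exp (-(L * t')) := by
  have h1 : Real.log t - Real.log t' ≤ t / t' - 1 := by
    have := Real.log_le_sub_one_of_pos (show 0 < t / t' by positivity)
    rwa [Real.log_div ht.ne' ht'.ne'] at this
  have h2 : Real.log t - Real.log t' ≤ L * t - L * t' := by
    have he : t / t' - 1 = (t - t') * (1 / t') := by field_simp
    nlinarith
  calc t * Real.exp (-(L * t)) = Real.exp (Real.log t - L * t) := by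
        rw [sub_eq_add_neg, Real.exp_add, Real.exp_log ht]
    _ ≤ Real.exp (Real.log t' - L * t') := Real.exp_le_exp.2 (by linarith)
    _ = t' * Real.exp (-(L * t')) := by
        rw [sub_eq_add_neg, Real.exp_add, Real.exp_log ht']

private lemma psi_sup_eq (p L s' : ℝ) (hp : 2 ≤ p) (h2 : 2 ≤ s') (hsp : s' ≤ p)
    (hcond : ∀ s : ℝ, 2 ≤ s → s ≤ p → (1 / s - 1 / s') * (s' - L) ≤ 0) :
    sSup {y : ℝ | ∃ s : ℝ, 2 ≤ s ∧ s ≤ p ∧ y = p / s * Real.exp (-(L * (1 / s)))} =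
      p / s' * Real.exp (-(L * (1 / s'))) := by
  have hp0 : 0 < p := by linarith
  have hs'0 : 0 < s' := by linarith
  apply IsGreatest.csSup_eq
  constructor
  · exact ⟨s', h2, hsp, rfl⟩
  · rintro y ⟨s, hs2, hsP, rfl⟩
    have hs0 : 0 < s := by linarith
    have hk := psi_key L (1 / s) (1 / s') (by positivity) (by positivity)
      (by
        have : 1 / (1 / s') = s' := one_div_one_div s'
        rw [this]
        exact hcond s hs2 hsP)
    calc p / s * Real.exp (-(L * (1 / s)))
        = p * (1 / s * Real.exp (-(L * (1 / s)))) := by ring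
      _ ≤ p * (1 / s' * Real.exp (-(L * (1 / s')))) := by
          exact mul_le_mul_of_nonneg_left hk hp0.le
      _ = p / s' * Real.exp (-(L * (1 / s'))) := by ring

theorem psi_eq_sup (p M σ : ℝ) (hp : 2 ≤ p) (hM : 0 < M) (hσ : 0 < σ) :
    (if p < Real.log (p * M ^ 2 / σ ^ 2) then (σ ^ 2 / (p * M ^ 2)) ^ (1 / p) * M
      else if p < Real.exp 2 * σ ^ 2 / M ^ 2 then 1 / 2 * Real.sqrt p * σ
      else p / (Real.exp 1 * Real.log (p * M ^ 2 / σ ^ 2)) * M) =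
      M * sSup {y : ℝ | ∃ s : ℝ, 2 ≤ s ∧ s ≤ p ∧
        y = p / s * (σ ^ 2 / (p * M ^ 2)) ^ (1 / s)} := by
  have hp0 : 0 < p := by linarith
  set L := Real.log (p * M ^ 2 / σ ^ 2) with hL
  set α := σ ^ 2 / (p * M ^ 2) with hα
  have hα0 : 0 < α := by positivity
  have hlogα : Real.log α = -L := by
    rw [hα, hL, Real.log_div (by positivity) (by positivity),
      Real.log_div (by positivity) (by positivity)]
    ring
  have hf : ∀ s : ℝ, 0 < s → α ^ (1 / s) = Real.exp (-(L * (1 / s))) := by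
    intro s hs
    rw [Real.rpow_def_of_pos hα0, hlogα]
    ring_nf
  have hset : {y : ℝ | ∃ s : ℝ, 2 ≤ s ∧ s ≤ p ∧ y = p / s * α ^ (1 / s)} =
      {y : ℝ | ∃ s : ℝ, 2 ≤ s ∧ s ≤ p ∧ y = p / s * Real.exp (-(L * (1 / s)))} := by
    ext y
    constructor
    · rintro ⟨s, h1, h2, rfl⟩
      exact ⟨s, h1, h2, by rw [hf s (by linarith)]⟩
    · rintro ⟨s, h1, h2, rfl⟩
      exact ⟨s, h1, h2, by rw [hf s (by linarith)]⟩
  rw [hset]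
  by_cases hc1 : p < L
  · rw [if_pos hc1, psi_sup_eq p L p hp hp le_rfl
      (by
        intro s hs2 hsP
        have h1 : 1 / p ≤ 1 / s := by
          apply one_div_le_one_div_of_le (by linarith) hsP
        nlinarith)]
    rw [hf p hp0, div_self hp0.ne', one_mul]
    ring
  · rw [if_neg hc1]
    push_neg at hc1
    by_cases hc2 : p < Real.exp 2 * σ ^ 2 / M ^ 2
    · rw [if_pos hc2]
      have hL2 : L < 2 := by
        have h1 : p * M ^ 2 / σ ^ 2 < Real.exp 2 := by
          rw [div_lt_iff₀ (by positivity)]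
          rw [lt_div_iff₀ (by positivity)] at hc2
          nlinarith
        calc L < Real.log (Real.exp 2) :=
              Real.log_lt_log (by positivity) h1
          _ = 2 := Real.log_exp 2
      rw [psi_sup_eq p L 2 hp le_rfl hp
        (by
          intro s hs2 hsP
          have h1 : 1 / s ≤ 1 / 2 := by
            apply one_div_le_one_div_of_le (by norm_num) hs2
          nlinarith)]
      rw [← hf 2 (by norm_num)]
      have hαhalf : α ^ (1 / (2:ℝ)) = σ / (Real.sqrt p * M) := by
        rw [← Real.sqrt_eq_rpow]
        have h : α = (σ / (Real.sqrt p * M)) ^ 2 := by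
          rw [div_pow, mul_pow, Real.sq_sqrt hp0.le, hα]
        rw [h, Real.sqrt_sq (by positivity)]
      rw [hαhalf]
      have hs : Real.sqrt p * Real.sqrt p = p := Real.mul_self_sqrt hp0.le
      have hsp : 0 < Real.sqrt p := Real.sqrt_pos.2 hp0
      field_simp
      linear_combination hs
    · rw [if_neg hc2]
      push_neg at hc2
      have hL2 : 2 ≤ L := by
        have h1 : Real.exp 2 ≤ p * M ^ 2 / σ ^ 2 := by
          rw [le_div_iff₀ (by positivity)]
          rw [div_le_iff₀ (by positivity)] at hc2
          nlinarith
        calc (2:ℝ) = Real.log (Real.exp 2) := (Real.log_exp 2).symm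
          _ ≤ L := Real.log_le_log (by positivity) h1
      have hL0 : 0 < L := by linarith
      rw [psi_sup_eq p L L hp hL2 hc1 (by intro s _ _; simp)]
      rw [mul_one_div, div_self hL0.ne', Real.exp_neg]
      have he : 0 < Real.exp 1 := Real.exp_pos 1
      field_simp
end

section
/- For $p \ge 2$ and positive reals $M, \sigma$, the function $\Psi_p(M, \sigma^2) = M \cdot \sup\{ (p/s)(\sigma^2/(pM^2))^{1/s} : 2 \le s \le p \}$ satisfies $\Psi_p(M, \sigma^2) \le \max\{ \frac{1}{2}\sqrt{p}\,\sigma, \frac{1}{2e} p M \}$. -/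
noncomputable def Psi (p M V : ℝ) : ℝ :=
  M * sSup {y : ℝ | ∃ s : ℝ, 2 ≤ s ∧ s ≤ p ∧ y = p / s * (V / (p * M ^ 2)) ^ (1 / s)}

lemma key_aux (a u : ℝ) (ha : 0 < a) (hu : 0 < u) (hu2 : u ≤ 1/2) :
    u * a ^ u ≤ max (Real.sqrt a / 2) (1 / (2 * Real.exp 1)) := by
  set c := Real.log a with hc
  have hau : a ^ u = Real.exp (c * u) := Real.rpow_def_of_pos ha u
  rcases le_or_gt (-2) c with h | h
  · refine le_max_of_le_left ?_
    have hsa : Real.sqrt a = Real.exp (c * (1/2)) := by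
      rw [Real.sqrt_eq_rpow, Real.rpow_def_of_pos ha]
    have h1 : (2 : ℝ) * u ≤ Real.exp ((1/2 - u) * c) := by
      have h2 : (2*u - 1 : ℝ) ≤ (1/2 - u) * c := by nlinarith
      calc (2:ℝ) * u ≤ Real.exp (2*u - 1) := by
            linarith [Real.add_one_le_exp (2*u - 1)]
        _ ≤ Real.exp ((1/2 - u) * c) := Real.exp_le_exp.2 h2
    have hepos := Real.exp_pos (c * u)
    calc u * a ^ u = (2 * u) * Real.exp (c * u) / 2 := by rw [hau]; ring
      _ ≤ Real.exp ((1/2 - u) * c) * Real.exp (c * u) / 2 := by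
          gcongr
      _ = Real.exp (c * (1/2)) / 2 := by rw [← Real.exp_add]; ring_nf
      _ = Real.sqrt a / 2 := by rw [hsa]
  · refine le_max_of_le_right ?_
    have h1 : a ^ u ≤ Real.exp (-(2*u)) := by
      rw [hau]
      exact Real.exp_le_exp.2 (by nlinarith)
    have h2 : (2 : ℝ) * u ≤ Real.exp (2*u - 1) :=
      by linarith [Real.add_one_le_exp (2*u - 1)]
    have h3 : Real.exp (2*u - 1) = Real.exp (2*u) / Real.exp 1 := Real.exp_sub _ _
    have h4 : u * Real.exp (-(2*u)) ≤ 1 / (2 * Real.exp 1) := by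
      rw [Real.exp_neg, inv_eq_one_div, mul_one_div,
        div_le_div_iff₀ (Real.exp_pos _) (by positivity)]
      have h5 : 2 * u * Real.exp 1 ≤ Real.exp (2*u) := by
        rw [h3] at h2
        have := Real.exp_pos 1
        calc 2 * u * Real.exp 1 ≤ (Real.exp (2*u) / Real.exp 1) * Real.exp 1 := by gcongr
          _ = Real.exp (2*u) := by field_simp
      nlinarith
    calc u * a ^ u ≤ u * Real.exp (-(2*u)) := by gcongr
      _ ≤ 1 / (2 * Real.exp 1) := h4

theorem psi_le_max (p M σ : ℝ) (hp : 2 ≤ p) (hM : 0 < M) (hσ : 0 < σ) :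
    Psi p M (σ ^ 2) ≤ max (1 / 2 * Real.sqrt p * σ) (1 / (2 * Real.exp 1) * p * M) := by
  have hp0 : (0:ℝ) < p := by linarith
  set a : ℝ := σ ^ 2 / (p * M ^ 2) with ha_def
  have ha : 0 < a := by positivity
  have hsp2 : Real.sqrt p ^ 2 = p := Real.sq_sqrt (by linarith)
  have hspne : Real.sqrt p ≠ 0 := by positivity
  have hsa : Real.sqrt a = σ / (Real.sqrt p * M) := by
    have h1 : (σ / (Real.sqrt p * M)) ^ 2 = a := by
      rw [div_pow, mul_pow, hsp2]
    rw [← h1, Real.sqrt_sq (by positivity)]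
  have hkey : p * (Real.sqrt a / 2) = 1/2 * Real.sqrt p * σ / M := by
    rw [hsa]
    have hps : Real.sqrt p * Real.sqrt p = p := Real.mul_self_sqrt (by linarith)
    field_simp
    linear_combination (-1) * hsp2
  set B : ℝ := max (1/2 * Real.sqrt p * σ / M) (1 / (2 * Real.exp 1) * p) with hB
  have hB0 : 0 ≤ B := le_max_of_le_right (by positivity)
  have hsup : sSup {y : ℝ | ∃ s : ℝ, 2 ≤ s ∧ s ≤ p ∧
      y = p / s * (σ^2 / (p * M ^ 2)) ^ (1 / s)} ≤ B := by
    apply Real.sSup_le _ hB0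
    rintro y ⟨s, hs2, hsp', rfl⟩
    have hs0 : (0:ℝ) < s := by linarith
    have hu : 0 < 1/s := by positivity
    have hu2 : 1/s ≤ 1/2 := by
      rw [div_le_div_iff₀ hs0 (by norm_num)]; linarith
    have h := key_aux a (1/s) ha hu hu2
    have h2 : p / s * (σ^2 / (p * M ^ 2)) ^ (1/s) = p * (1/s * a ^ (1/s)) := by
      rw [← ha_def]; ring
    rw [h2]
    calc p * (1/s * a ^ (1/s)) ≤ p * max (Real.sqrt a / 2) (1 / (2 * Real.exp 1)) := by
          gcongr
      _ = max (p * (Real.sqrt a / 2)) (p * (1 / (2 * Real.exp 1))) := by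
          exact mul_max_of_nonneg _ _ hp0.le
      _ ≤ B := by
          rw [hkey]
          apply max_le_max le_rfl
          apply le_of_eq; ring
  have : Psi p M (σ ^ 2) ≤ M * B := by
    unfold Psi
    exact mul_le_mul_of_nonneg_left hsup hM.le
  refine this.trans (le_of_eq ?_)
  rw [hB, mul_max_of_nonneg _ _ hM.le]
  congr 1
  · field_simp
  · ring
end

section
/- For $p \ge 2$ and positive reals $M, \sigma$ with $e^2 \sigma^2 / M^2 \le p$, the function $\Psi_p(M, \sigma^2) = M \cdot \sup\{ (p/s)(\sigma^2/(pM^2))^{1/s} : 2 \le s \le p \}$ satisfies $\Psi_p(M, \sigma^2) \le \frac{p}{e \log(p M^2 / \sigma^2)} M$. -/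
theorem psi_far_out (p M σ : ℝ) (hp : 2 ≤ p) (hM : 0 < M) (hσ : 0 < σ)
    (h : Real.exp 2 * σ ^ 2 / M ^ 2 ≤ p) :
    Psi p M (σ ^ 2) ≤ p / (Real.exp 1 * Real.log (p * M ^ 2 / σ ^ 2)) * M := by
  have hM2 : (0:ℝ) < M ^ 2 := by positivity
  have hσ2 : (0:ℝ) < σ ^ 2 := by positivity
  have hp0 : (0:ℝ) < p := by linarith
  set L := Real.log (p * M ^ 2 / σ ^ 2) with hL
  have hratio : Real.exp 2 ≤ p * M ^ 2 / σ ^ 2 := by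
    rw [le_div_iff₀ hσ2]
    rw [div_le_iff₀ hM2] at h
    nlinarith
  have hL2 : 2 ≤ L := by
    calc (2:ℝ) = Real.log (Real.exp 2) := (Real.log_exp 2).symm
    _ ≤ L := Real.log_le_log (Real.exp_pos 2) hratio
  have hLpos : 0 < L := by linarith
  have hbound : 0 ≤ p / (Real.exp 1 * L) := by positivity
  have key : sSup {y : ℝ | ∃ s : ℝ, 2 ≤ s ∧ s ≤ p ∧
      y = p / s * (σ ^ 2 / (p * M ^ 2)) ^ (1 / s)} ≤ p / (Real.exp 1 * L) := by
    apply Real.sSup_le _ hbound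
    rintro y ⟨s, hs2, hsp, rfl⟩
    have hs0 : 0 < s := by linarith
    have hc : (0:ℝ) < σ ^ 2 / (p * M ^ 2) := by positivity
    have hlogc : Real.log (σ ^ 2 / (p * M ^ 2)) = -L := by
      rw [hL, Real.log_div (ne_of_gt hσ2) (by positivity),
        Real.log_div (by positivity) (ne_of_gt hσ2)]
      ring
    have hrpow : (σ ^ 2 / (p * M ^ 2)) ^ (1 / s) = Real.exp (-(L / s)) := by
      rw [Real.rpow_def_of_pos hc, hlogc]; ring_nf
    rw [hrpow]
    have hxe : (L / s) * Real.exp (-(L / s)) ≤ Real.exp (-1) := by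
      have h2 : L / s ≤ Real.exp (L / s - 1) := by
        have := Real.add_one_le_exp (L / s - 1); linarith
      calc (L / s) * Real.exp (-(L / s))
          ≤ Real.exp (L / s - 1) * Real.exp (-(L / s)) :=
            mul_le_mul_of_nonneg_right h2 (Real.exp_pos _).le
      _ = Real.exp (-1) := by rw [← Real.exp_add]; ring_nf
    have heq : p / s * Real.exp (-(L / s)) = p / L * ((L / s) * Real.exp (-(L / s))) := by
      field_simp
    rw [heq]
    have hexp1 : Real.exp (-1) = 1 / Real.exp 1 := by rw [Real.exp_neg]; ring
    calc p / L * ((L / s) * Real.exp (-(L / s)))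
        ≤ p / L * (1 / Real.exp 1) := by
          apply mul_le_mul_of_nonneg_left _ (by positivity)
          rw [← hexp1]; exact hxe
    _ = p / (Real.exp 1 * L) := by
          rw [div_mul_div_comm, mul_one, mul_comm L]
  unfold Psi
  have := mul_le_mul_of_nonneg_left key hM.le
  calc M * sSup {y : ℝ | ∃ s : ℝ, 2 ≤ s ∧ s ≤ p ∧
        y = p / s * (σ ^ 2 / (p * M ^ 2)) ^ (1 / s)}
      ≤ M * (p / (Real.exp 1 * L)) := this
  _ = p / (Real.exp 1 * L) * M := by ring
end

section
/- Let $h : U \to [m]$ be a uniformly random function from a finite set $U$ to $[m] = \{0, \ldots, m-1\}$ with $m \ge 1$, let $\varepsilon : U \to \{-1, 1\}$ be a uniformly random sign function independent of $h$, and let $v : U \times [m] \to \mathbb{R}$ be a fixed value function with $\sum_{j \in [m]} v(x, j) = 0$ for all $x \in U$. Then for all $p \ge 2$: $\frac{1}{2} \|\sum_{x \in U} \varepsilon(x) v(x, h(x))\|_p \le \|\sum_{x \in U} v(x, h(x))\|_p \le 2 \|\sum_{x \in U} \varepsilon(x) v(x, h(x))\|_p$. -/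
open MeasureTheory Finset

lemma convexOn_abs_rpow {p : ℝ} (hp : 1 ≤ p) :
    ConvexOn ℝ Set.univ (fun t : ℝ => |t| ^ p) := by
  have habs : ConvexOn ℝ Set.univ (fun t : ℝ => |t|) := by
    exact (convexOn_univ_norm (E := ℝ))
  have himg : (fun t : ℝ => |t|) '' Set.univ = Set.Ici 0 := by
    ext a
    constructor
    · rintro ⟨t, -, rfl⟩; exact abs_nonneg t
    · intro ha; exact ⟨a, trivial, abs_of_nonneg ha⟩
  have hr : ConvexOn ℝ ((fun t : ℝ => |t|) '' Set.univ) (fun x : ℝ => x ^ p) := by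
    rw [himg]; exact convexOn_rpow hp
  have hmono : MonotoneOn (fun x : ℝ => x ^ p) ((fun t : ℝ => |t|) '' Set.univ) := by
    rw [himg]; intro a ha b _ hab; exact Real.rpow_le_rpow ha hab (by linarith)
  exact hr.comp habs hmono

lemma jensen_zero_mean {ι : Type*} [Fintype ι] [Nonempty ι] {p : ℝ} (hp : 1 ≤ p)
    (w : ι → ℝ) (hw : ∑ h, w h = 0) (h : ι) :
    |w h| ^ p ≤ (Fintype.card ι : ℝ)⁻¹ * ∑ h', |w h - w h'| ^ p := by
  have hcard : (0:ℝ) < Fintype.card ι := by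
    have : 0 < Fintype.card ι := Fintype.card_pos
    exact_mod_cast this
  set c : ℝ := (Fintype.card ι : ℝ)⁻¹ with hc
  have hc0 : 0 ≤ c := by positivity
  have hkey : w h = ∑ h' : ι, c • (w h - w h') := by
    simp only [smul_eq_mul, ← Finset.mul_sum, Finset.sum_sub_distrib, hw,
      Finset.sum_const, Finset.card_univ, nsmul_eq_mul, sub_zero]
    field_simp [hc]
    rw [hc, mul_assoc, inv_mul_cancel₀ hcard.ne', mul_one]
  have hsum1 : ∑ _h' : ι, c = 1 := by
    simp only [Finset.sum_const, Finset.card_univ, nsmul_eq_mul, hc]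
    field_simp
  have := (convexOn_abs_rpow hp).map_sum_le (t := Finset.univ)
    (w := fun _ : ι => c) (p := fun h' => w h - w h')
    (fun _ _ => hc0) hsum1 (fun _ _ => Set.mem_univ _)
  rw [← hkey] at this
  calc |w h| ^ p ≤ ∑ h' : ι, c * |w h - w h'| ^ p := this
    _ = c * ∑ h', |w h - w h'| ^ p := by rw [Finset.mul_sum]

lemma sum_eval_eq_zero {U : Type*} [Fintype U] [DecidableEq U] {m : ℕ} [NeZero m]
    (u : U → Fin m → ℝ) (hu : ∀ x, ∑ j, u x j = 0) :
    ∑ h : U → Fin m, ∑ x, u x (h x) = 0 := by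
  rw [Finset.sum_comm]
  refine Finset.sum_eq_zero fun x _ => ?_
  have he : ∑ h : U → Fin m, u x (h x)
      = ∑ q : Fin m × ({ j // j ≠ x } → Fin m), u x q.1 :=
    Fintype.sum_equiv (Equiv.funSplitAt x (Fin m)) _ _ (fun h => rfl)
  rw [he, Fintype.sum_prod_type]
  simp only [Finset.sum_const, Finset.card_univ, nsmul_eq_mul]
  rw [← Finset.mul_sum, hu x, mul_zero]

lemma flip_signs {U : Type*} [Fintype U] [DecidableEq U] {m : ℕ}
    (g : U → Fin m → ℝ) (ε : U → Bool) (q : ℝ) :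
    ∑ ω : (U → Fin m) × (U → Fin m),
        |∑ x, (if ε x then (1:ℝ) else -1) * (g x (ω.1 x) - g x (ω.2 x))| ^ q
      = ∑ ω : (U → Fin m) × (U → Fin m), |∑ x, (g x (ω.1 x) - g x (ω.2 x))| ^ q := by
  have hinv : Function.Involutive (fun ω : (U → Fin m) × (U → Fin m) =>
      ((fun x => if ε x then ω.1 x else ω.2 x : U → Fin m),
       (fun x => if ε x then ω.2 x else ω.1 x : U → Fin m))) := by
    intro ω
    refine Prod.ext ?_ ?_ <;> · funext x; by_cases hx : ε x <;> simp [hx]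
  refine Fintype.sum_bijective _ hinv.bijective _ _ ?_
  intro ω
  congr 1
  congr 1
  refine Finset.sum_congr rfl fun x _ => ?_
  by_cases hx : ε x <;> simp [hx]

lemma two_point_rpow {p : ℝ} (hp : 1 ≤ p) {x y : ℝ} (hx : 0 ≤ x) (hy : 0 ≤ y) :
    (x + y) ^ p ≤ 2 ^ (p - 1) * (x ^ p + y ^ p) := by
  lift x to NNReal using hx
  lift y to NNReal using hy
  have := NNReal.rpow_add_le_mul_rpow_add_rpow x y hp
  exact_mod_cast this

lemma abs_sub_rpow_le {p : ℝ} (hp : 1 ≤ p) (a b : ℝ) :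
    |a - b| ^ p ≤ 2 ^ (p - 1) * (|a| ^ p + |b| ^ p) := by
  have h1 : |a - b| ^ p ≤ (|a| + |b|) ^ p :=
    Real.rpow_le_rpow (abs_nonneg _) (abs_sub _ _) (by linarith)
  exact h1.trans (two_point_rpow hp (abs_nonneg a) (abs_nonneg b))

lemma main_bound {U : Type*} [Fintype U] [DecidableEq U] {m : ℕ} [NeZero m]
    {p : ℝ} (hp : 1 ≤ p) (u w : U → Fin m → ℝ) (hu : ∀ x, ∑ j, u x j = 0)
    (hflip : ∑ q : (U → Fin m) × (U → Fin m), |∑ x, (u x (q.1 x) - u x (q.2 x))| ^ p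
      = ∑ q : (U → Fin m) × (U → Fin m), |∑ x, (w x (q.1 x) - w x (q.2 x))| ^ p) :
    ∑ h : U → Fin m, |∑ x, u x (h x)| ^ p
      ≤ 2 ^ p * ∑ h : U → Fin m, |∑ x, w x (h x)| ^ p := by
  have hMpos : (0:ℝ) < (Fintype.card (U → Fin m) : ℝ) := by
    have : 0 < Fintype.card (U → Fin m) := Fintype.card_pos
    exact_mod_cast this
  have step1 : ∑ h : U → Fin m, |∑ x, u x (h x)| ^ p
      ≤ (Fintype.card (U → Fin m) : ℝ)⁻¹ *
        ∑ q : (U → Fin m) × (U → Fin m), |∑ x, (u x (q.1 x) - u x (q.2 x))| ^ p := by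
    rw [Fintype.sum_prod_type, Finset.mul_sum]
    refine Finset.sum_le_sum fun h _ => ?_
    have hj := jensen_zero_mean hp (fun h : U → Fin m => ∑ x, u x (h x))
      (sum_eval_eq_zero u hu) h
    refine hj.trans_eq ?_
    congr 1
    refine Finset.sum_congr rfl fun h' _ => ?_
    rw [Finset.sum_sub_distrib]
  have step3 : ∑ q : (U → Fin m) × (U → Fin m), |∑ x, (w x (q.1 x) - w x (q.2 x))| ^ p
      ≤ 2 ^ (p - 1) * (2 * (Fintype.card (U → Fin m) : ℝ) *
          ∑ h : U → Fin m, |∑ x, w x (h x)| ^ p) := by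
    calc ∑ q : (U → Fin m) × (U → Fin m), |∑ x, (w x (q.1 x) - w x (q.2 x))| ^ p
        ≤ ∑ q : (U → Fin m) × (U → Fin m),
            2 ^ (p - 1) * (|∑ x, w x (q.1 x)| ^ p + |∑ x, w x (q.2 x)| ^ p) := by
          refine Finset.sum_le_sum fun q _ => ?_
          rw [Finset.sum_sub_distrib]
          exact abs_sub_rpow_le hp _ _
      _ = 2 ^ (p - 1) * (2 * (Fintype.card (U → Fin m) : ℝ) *
            ∑ h : U → Fin m, |∑ x, w x (h x)| ^ p) := by
          rw [← Finset.mul_sum]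
          congr 1
          rw [Fintype.sum_prod_type]
          simp only [Finset.sum_add_distrib, Finset.sum_const, Finset.card_univ,
            nsmul_eq_mul, ← Finset.mul_sum]
          ring
  have h2p : (0:ℝ) < 2 ^ (p - 1) := Real.rpow_pos_of_pos (by norm_num) _
  calc ∑ h : U → Fin m, |∑ x, u x (h x)| ^ p
      ≤ (Fintype.card (U → Fin m) : ℝ)⁻¹ *
        ∑ q : (U → Fin m) × (U → Fin m), |∑ x, (u x (q.1 x) - u x (q.2 x))| ^ p := step1
    _ = (Fintype.card (U → Fin m) : ℝ)⁻¹ *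
        ∑ q : (U → Fin m) × (U → Fin m), |∑ x, (w x (q.1 x) - w x (q.2 x))| ^ p := by
          rw [hflip]
    _ ≤ (Fintype.card (U → Fin m) : ℝ)⁻¹ * (2 ^ (p - 1) *
          (2 * (Fintype.card (U → Fin m) : ℝ) *
            ∑ h : U → Fin m, |∑ x, w x (h x)| ^ p)) := by
          exact mul_le_mul_of_nonneg_left step3 (by positivity)
    _ = 2 ^ (p - 1) * 2 * ∑ h : U → Fin m, |∑ x, w x (h x)| ^ p := by
          rw [show ((Fintype.card (U → Fin m) : ℝ))⁻¹ * (2 ^ (p - 1) *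
              (2 * (Fintype.card (U → Fin m) : ℝ) *
                ∑ h : U → Fin m, |∑ x, w x (h x)| ^ p))
            = ((Fintype.card (U → Fin m) : ℝ)⁻¹ * (Fintype.card (U → Fin m) : ℝ)) *
              (2 ^ (p - 1) * 2 * ∑ h : U → Fin m, |∑ x, w x (h x)| ^ p) by ring,
            inv_mul_cancel₀ hMpos.ne', one_mul]
    _ = 2 ^ p * ∑ h : U → Fin m, |∑ x, w x (h x)| ^ p := by
          have h22 : (2:ℝ) ^ (p - 1) * 2 = 2 ^ p := by
            rw [Real.rpow_sub (by norm_num : (0:ℝ) < 2), Real.rpow_one]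
            field_simp
          rw [h22]

lemma rpow_root_le {p A B : ℝ} (hp : 0 < p) (hA : 0 ≤ A) (hB : 0 ≤ B)
    (h : A ≤ 2 ^ p * B) : A ^ (1/p) ≤ 2 * B ^ (1/p) := by
  have h2 : (0:ℝ) ≤ 2 ^ p := (Real.rpow_pos_of_pos two_pos p).le
  have h3 := Real.rpow_le_rpow hA h (by positivity : (0:ℝ) ≤ 1/p)
  rwa [Real.mul_rpow h2 hB, ← Real.rpow_mul (by norm_num : (0:ℝ) ≤ 2),
    mul_one_div_cancel hp.ne', Real.rpow_one] at h3

theorem sampling_symmetrize (U : Type*) [Fintype U] [DecidableEq U] [Nonempty U]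
    (m : ℕ) [NeZero m] (hm : 1 ≤ m)
    (v : U → Fin m → ℝ) (hv : ∀ x, ∑ j, v x j = 0) (p : ℝ) (hp : 2 ≤ p) :
    let μ := (PMF.uniformOfFintype ((U → Fin m) × (U → Bool))).toMeasure
    let S := fun ω : (U → Fin m) × (U → Bool) =>
      ∑ x, (if ω.2 x then (1 : ℝ) else -1) * v x (ω.1 x)
    let T := fun ω : (U → Fin m) × (U → Bool) => ∑ x, v x (ω.1 x)
    1 / 2 * (∫ ω, |S ω| ^ p ∂μ) ^ (1 / p) ≤ (∫ ω, |T ω| ^ p ∂μ) ^ (1 / p) ∧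
      (∫ ω, |T ω| ^ p ∂μ) ^ (1 / p) ≤ 2 * (∫ ω, |S ω| ^ p ∂μ) ^ (1 / p) := by
  intro μ S T
  have hp1 : (1:ℝ) ≤ p := by linarith
  have hppos : (0:ℝ) < p := by linarith
  have hint : ∀ f : ((U → Fin m) × (U → Bool)) → ℝ,
      ∫ ω, f ω ∂μ
        = (Fintype.card ((U → Fin m) × (U → Bool)) : ℝ)⁻¹ * ∑ ω, f ω := by
    intro f
    rw [PMF.integral_eq_sum]
    simp only [PMF.uniformOfFintype_apply, smul_eq_mul]
    rw [← Finset.mul_sum]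
    congr 1
    rw [ENNReal.toReal_inv]
    simp
  -- core inequalities
  have hS : ∑ ω : (U → Fin m) × (U → Bool), |S ω| ^ p
      = ∑ ε : U → Bool, ∑ h : U → Fin m,
          |∑ x, (if ε x then (1:ℝ) else -1) * v x (h x)| ^ p := by
    rw [Fintype.sum_prod_type, Finset.sum_comm]
  have hT : ∑ ω : (U → Fin m) × (U → Bool), |T ω| ^ p
      = ∑ ε : U → Bool, ∑ h : U → Fin m, |∑ x, v x (h x)| ^ p := by
    rw [Fintype.sum_prod_type, Finset.sum_comm]
  have coreST : ∑ ω : (U → Fin m) × (U → Bool), |S ω| ^ p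
      ≤ 2 ^ p * ∑ ω : (U → Fin m) × (U → Bool), |T ω| ^ p := by
    rw [hS, hT, Finset.mul_sum]
    refine Finset.sum_le_sum fun ε _ => ?_
    refine main_bound hp1 (fun x j => (if ε x then (1:ℝ) else -1) * v x j) v
      (fun x => by rw [← Finset.mul_sum, hv, mul_zero]) ?_
    rw [show (fun q : (U → Fin m) × (U → Fin m) =>
        |∑ x, ((if ε x then (1:ℝ) else -1) * v x (q.1 x)
          - (if ε x then (1:ℝ) else -1) * v x (q.2 x))| ^ p)
      = (fun q : (U → Fin m) × (U → Fin m) =>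
        |∑ x, (if ε x then (1:ℝ) else -1) * (v x (q.1 x) - v x (q.2 x))| ^ p) from
      funext fun q => by rw [show ∑ x, ((if ε x then (1:ℝ) else -1) * v x (q.1 x)
          - (if ε x then (1:ℝ) else -1) * v x (q.2 x))
        = ∑ x, (if ε x then (1:ℝ) else -1) * (v x (q.1 x) - v x (q.2 x)) from
        Finset.sum_congr rfl fun x _ => (mul_sub _ _ _).symm]]
    exact flip_signs v ε p
  have coreTS : ∑ ω : (U → Fin m) × (U → Bool), |T ω| ^ p
      ≤ 2 ^ p * ∑ ω : (U → Fin m) × (U → Bool), |S ω| ^ p := by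
    rw [hS, hT, Finset.mul_sum]
    refine Finset.sum_le_sum fun ε _ => ?_
    refine main_bound hp1 v (fun x j => (if ε x then (1:ℝ) else -1) * v x j) hv ?_
    rw [show (fun q : (U → Fin m) × (U → Fin m) =>
        |∑ x, ((if ε x then (1:ℝ) else -1) * v x (q.1 x)
          - (if ε x then (1:ℝ) else -1) * v x (q.2 x))| ^ p)
      = (fun q : (U → Fin m) × (U → Fin m) =>
        |∑ x, (if ε x then (1:ℝ) else -1) * (v x (q.1 x) - v x (q.2 x))| ^ p) from
      funext fun q => by rw [show ∑ x, ((if ε x then (1:ℝ) else -1) * v x (q.1 x)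
          - (if ε x then (1:ℝ) else -1) * v x (q.2 x))
        = ∑ x, (if ε x then (1:ℝ) else -1) * (v x (q.1 x) - v x (q.2 x)) from
        Finset.sum_congr rfl fun x _ => (mul_sub _ _ _).symm]]
    exact (flip_signs v ε p).symm
  -- translate to integrals
  have hNpos : (0:ℝ) < (Fintype.card ((U → Fin m) × (U → Bool)) : ℝ) := by
    have : 0 < Fintype.card ((U → Fin m) × (U → Bool)) := Fintype.card_pos
    exact_mod_cast this
  have hASnn : (0:ℝ) ≤ ∑ ω : (U → Fin m) × (U → Bool), |S ω| ^ p :=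
    Finset.sum_nonneg fun _ _ => Real.rpow_nonneg (abs_nonneg _) p
  have hATnn : (0:ℝ) ≤ ∑ ω : (U → Fin m) × (U → Bool), |T ω| ^ p :=
    Finset.sum_nonneg fun _ _ => Real.rpow_nonneg (abs_nonneg _) p
  have hIS := hint (fun ω => |S ω| ^ p)
  have hIT := hint (fun ω => |T ω| ^ p)
  have hISnn : (0:ℝ) ≤ ∫ ω, |S ω| ^ p ∂μ := by rw [hIS]; positivity
  have hITnn : (0:ℝ) ≤ ∫ ω, |T ω| ^ p ∂μ := by rw [hIT]; positivity
  have key1 : (∫ ω, |S ω| ^ p ∂μ) ^ (1/p) ≤ 2 * (∫ ω, |T ω| ^ p ∂μ) ^ (1/p) := by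
    refine rpow_root_le hppos hISnn hITnn ?_
    rw [hIS, hIT]
    calc (Fintype.card ((U → Fin m) × (U → Bool)) : ℝ)⁻¹ *
          ∑ ω : (U → Fin m) × (U → Bool), |S ω| ^ p
        ≤ (Fintype.card ((U → Fin m) × (U → Bool)) : ℝ)⁻¹ *
          (2 ^ p * ∑ ω : (U → Fin m) × (U → Bool), |T ω| ^ p) :=
          mul_le_mul_of_nonneg_left coreST (by positivity)
      _ = 2 ^ p * ((Fintype.card ((U → Fin m) × (U → Bool)) : ℝ)⁻¹ *
          ∑ ω : (U → Fin m) × (U → Bool), |T ω| ^ p) := by ring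
  have key2 : (∫ ω, |T ω| ^ p ∂μ) ^ (1/p) ≤ 2 * (∫ ω, |S ω| ^ p ∂μ) ^ (1/p) := by
    refine rpow_root_le hppos hITnn hISnn ?_
    rw [hIS, hIT]
    calc (Fintype.card ((U → Fin m) × (U → Bool)) : ℝ)⁻¹ *
          ∑ ω : (U → Fin m) × (U → Bool), |T ω| ^ p
        ≤ (Fintype.card ((U → Fin m) × (U → Bool)) : ℝ)⁻¹ *
          (2 ^ p * ∑ ω : (U → Fin m) × (U → Bool), |S ω| ^ p) :=
          mul_le_mul_of_nonneg_left coreTS (by positivity)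
      _ = 2 ^ p * ((Fintype.card ((U → Fin m) × (U → Bool)) : ℝ)⁻¹ *
          ∑ ω : (U → Fin m) × (U → Bool), |S ω| ^ p) := by ring
  constructor
  · linarith [Real.rpow_nonneg hITnn (1/p)]
  · exact key2
end

section
/- Let $f : [2, \infty) \to \mathbb{R}_{>0}$ be an increasing function such that $p \mapsto f(1/p)$ is log-convex (i.e., $t \mapsto \log f(1/t)$ is convex on $(0, 1/2]$), and suppose there exist positive reals $K, M, \sigma$ such that $f(p) \le K \Psi_p(M, \sigma^2)$ for all even integers $p \ge 2$, where $\Psi_p(M, \sigma^2) = M \sup\{(p/s)(\sigma^2/(pM^2))^{1/s} : 2 \le s \le p\}$. Then $f(p) \le 2K \Psi_p(M, \sigma^2)$ for all real $p \ge 2$. -/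
open Real Set

def PsiSet (p M V : ℝ) : Set ℝ :=
  {y : ℝ | ∃ s : ℝ, 2 ≤ s ∧ s ≤ p ∧ y = p / s * (V / (p * M ^ 2)) ^ (1 / s)}

lemma Psi_eq (p M V : ℝ) : Psi p M V = M * sSup (PsiSet p M V) := rfl

lemma psi_log_ge {u : ℝ} (hu : 0 < u) : 1 - 1/u ≤ Real.log u := by
  have h := Real.log_le_sub_one_of_pos (show (0:ℝ) < u⁻¹ from inv_pos.2 hu)
  rw [Real.log_inv, inv_eq_one_div] at h
  linarith

lemma psi_el_eq {r M V s : ℝ} (hM : 0 < M) (hV : 0 < V) (hr : 0 < r) (hs : 0 < s) :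
    r / s * (V / (r * M ^ 2)) ^ (1 / s)
      = Real.exp (Real.log r - Real.log s + (Real.log (V / M ^ 2) - Real.log r) / s) := by
  have hM2 : (0:ℝ) < M ^ 2 := by positivity
  have hX : V / (r * M ^ 2) = (V / M ^ 2) / r := by
    rw [div_div, mul_comm]
  have hXpos : (0:ℝ) < (V / M ^ 2) / r := by positivity
  rw [hX, Real.rpow_def_of_pos hXpos, Real.log_div (by positivity) (ne_of_gt hr)]
  have hrs : r / s = Real.exp (Real.log r - Real.log s) := by
    rw [← Real.log_div (ne_of_gt hr) (ne_of_gt hs), Real.exp_log (div_pos hr hs)]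
  rw [hrs, ← Real.exp_add, mul_one_div]

lemma psi_bdd {r M V : ℝ} (hM : 0 < M) (hV : 0 < V) (hr : 2 ≤ r) :
    BddAbove (PsiSet r M V) := by
  have hr0 : (0:ℝ) < r := lt_of_lt_of_le two_pos hr
  have hX : (0:ℝ) < V / (r * M ^ 2) := by positivity
  refine ⟨r / 2 * (max 1 (V / (r * M ^ 2))) ^ ((2:ℝ)⁻¹), ?_⟩
  rintro y ⟨s, hs2, hsr, rfl⟩
  have hs0 : (0:ℝ) < s := lt_of_lt_of_le two_pos hs2
  have h1 : r / s ≤ r / 2 := div_le_div_of_nonneg_left hr0.le two_pos hs2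
  have h2 : (V / (r * M ^ 2)) ^ (1 / s) ≤ (max 1 (V / (r * M ^ 2))) ^ ((2:ℝ)⁻¹) := by
    calc (V / (r * M ^ 2)) ^ (1 / s) ≤ (max 1 (V / (r * M ^ 2))) ^ (1 / s) :=
        Real.rpow_le_rpow hX.le (le_max_right _ _) (by positivity)
    _ ≤ (max 1 (V / (r * M ^ 2))) ^ ((2:ℝ)⁻¹) := by
        apply Real.rpow_le_rpow_of_exponent_le (le_max_left _ _)
        rw [one_div]
        exact inv_anti₀ two_pos hs2
  exact mul_le_mul h1 h2 (by positivity) (by positivity)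

lemma psi_el_le_sSup {r M V s : ℝ} (hM : 0 < M) (hV : 0 < V) (hr : 2 ≤ r)
    (hs2 : 2 ≤ s) (hsr : s ≤ r) :
    r / s * (V / (r * M ^ 2)) ^ (1 / s) ≤ sSup (PsiSet r M V) :=
  le_csSup (psi_bdd hM hV hr) ⟨s, hs2, hsr, rfl⟩

lemma psi_sSup_pos {r M V : ℝ} (hM : 0 < M) (hV : 0 < V) (hr : 2 ≤ r) :
    0 < sSup (PsiSet r M V) := by
  have hr0 : (0:ℝ) < r := lt_of_lt_of_le two_pos hr
  have := psi_el_le_sSup (s := 2) hM hV hr le_rfl hr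
  have hel : (0:ℝ) < r / 2 * (V / (r * M ^ 2)) ^ (1 / (2:ℝ)) := by positivity
  linarith

/-- In the regime `r ≤ log r - log (V/M²)` the sup is attained at `s = r`. -/
lemma psi_T_le_big {r M V : ℝ} (hM : 0 < M) (hV : 0 < V) (hr : 2 ≤ r)
    (hbig : r ≤ Real.log r - Real.log (V / M ^ 2)) :
    sSup (PsiSet r M V) ≤ Real.exp ((Real.log (V / M ^ 2) - Real.log r) / r) := by
  have hr0 : (0:ℝ) < r := lt_of_lt_of_le two_pos hr
  apply Real.sSup_le _ (Real.exp_pos _).le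
  rintro y ⟨s, hs2, hsr, rfl⟩
  have hs0 : (0:ℝ) < s := lt_of_lt_of_le two_pos hs2
  rw [psi_el_eq hM hV hr0 hs0]
  apply Real.exp_le_exp.2
  set b := Real.log (V / M ^ 2)
  set L := Real.log r - b with hL
  -- need : log r - log s + (b - log r)/s ≤ (b - log r)/r
  -- i.e. log (r/s) ≤ L/s - L/r = L (r-s)/(s r)
  have hlog : Real.log r - Real.log s ≤ r / s - 1 := by
    have h := Real.log_le_sub_one_of_pos (div_pos hr0 hs0)
    rwa [Real.log_div (ne_of_gt hr0) (ne_of_gt hs0)] at h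
  have h1 : (r - s) * r ≤ (r - s) * L := by
    apply mul_le_mul_of_nonneg_left hbig (by linarith)
  have h2 : (r - s) * r / (s * r) ≤ (r - s) * L / (s * r) :=
    div_le_div_of_nonneg_right h1 (by positivity)
  have h3 : (r - s) * r / (s * r) = r / s - 1 := by field_simp
  have h4 : (r - s) * L / (s * r) = (Real.log r - b) / s - (Real.log r - b) / r := by
    rw [hL]; field_simp
  have h5 : (b - Real.log r) / r - (b - Real.log r) / s
      = (Real.log r - b) / s - (Real.log r - b) / r := by ring
  linarith

lemma psi_T_lb {p M V : ℝ} (hM : 0 < M) (hV : 0 < V) (hp : 2 ≤ p) :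
    Real.exp ((Real.log (V / M ^ 2) - Real.log p) / p) ≤ sSup (PsiSet p M V) := by
  have hp0 : (0:ℝ) < p := lt_of_lt_of_le two_pos hp
  have h := psi_el_le_sSup (s := p) hM hV hp hp le_rfl
  rw [psi_el_eq hM hV hp0 hp0] at h
  convert h using 2
  ring

lemma psi_T_mono {q p M V : ℝ} (hM : 0 < M) (hV : 0 < V) (hq : 2 ≤ q) (hqp : q ≤ p) :
    sSup (PsiSet q M V) ≤ sSup (PsiSet p M V) := by
  have hq0 : (0:ℝ) < q := lt_of_lt_of_le two_pos hq
  have hp : (2:ℝ) ≤ p := le_trans hq hqp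
  have hp0 : (0:ℝ) < p := lt_of_lt_of_le two_pos hp
  apply Real.sSup_le _ (psi_sSup_pos hM hV hp).le
  rintro y ⟨s, hs2, hsq, rfl⟩
  have hs0 : (0:ℝ) < s := lt_of_lt_of_le two_pos hs2
  rw [psi_el_eq hM hV hq0 hs0]
  set b := Real.log (V / M ^ 2)
  calc Real.exp (Real.log q - Real.log s + (b - Real.log q) / s)
      ≤ Real.exp (Real.log p - Real.log s + (b - Real.log p) / s) := by
        apply Real.exp_le_exp.2
        have hlog : Real.log q ≤ Real.log p := Real.log_le_log hq0 hqp
        have hs1 : 1 / s ≤ 1 := by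
          rw [div_le_one hs0]; linarith
        have hexp : Real.log p - Real.log s + (b - Real.log p) / s
            - (Real.log q - Real.log s + (b - Real.log q) / s)
            = (Real.log p - Real.log q) * (1 - 1 / s) := by
          field_simp; ring
        linarith [hexp, mul_nonneg (sub_nonneg.2 hlog) (sub_nonneg.2 hs1)]
    _ = p / s * (V / (p * M ^ 2)) ^ (1 / s) := (psi_el_eq hM hV hp0 hs0).symm
    _ ≤ sSup (PsiSet p M V) := psi_el_le_sSup hM hV hp hs2 (le_trans hsq hqp)

lemma psi_T_double {q M V : ℝ} (hM : 0 < M) (hV : 0 < V) (hq : 2 ≤ q)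
    (hA : Real.log q - Real.log (V / M ^ 2) ≤ q) :
    sSup (PsiSet (2 * q) M V) ≤ 2 * sSup (PsiSet q M V) := by
  have hq0 : (0:ℝ) < q := lt_of_lt_of_le two_pos hq
  have hTq := psi_sSup_pos hM hV hq
  apply Real.sSup_le _ (by linarith)
  rintro y ⟨s, hs2, hs2q, rfl⟩
  have hs0 : (0:ℝ) < s := lt_of_lt_of_le two_pos hs2
  have h2q0 : (0:ℝ) < 2 * q := by linarith
  rw [psi_el_eq hM hV h2q0 hs0]
  set b := Real.log (V / M ^ 2) with hb
  have hlog2q : Real.log (2 * q) = Real.log 2 + Real.log q :=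
    Real.log_mul two_ne_zero (ne_of_gt hq0)
  have hlog2 : (0:ℝ) < Real.log 2 := Real.log_pos one_lt_two
  have h2exp : ∀ t : ℝ, 2 * Real.exp t = Real.exp (Real.log 2 + t) := by
    intro t; rw [Real.exp_add, Real.exp_log two_pos]
  rcases le_total s q with hsq | hqs
  · calc Real.exp (Real.log (2*q) - Real.log s + (b - Real.log (2*q)) / s)
        ≤ 2 * Real.exp (Real.log q - Real.log s + (b - Real.log q) / s) := by
          rw [h2exp]
          apply Real.exp_le_exp.2
          rw [hlog2q]
          have : (b - (Real.log 2 + Real.log q)) / s ≤ (b - Real.log q) / s := by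
            apply div_le_div_of_nonneg_right _ hs0.le
            linarith
          linarith
      _ ≤ 2 * sSup (PsiSet q M V) := by
          rw [← psi_el_eq hM hV hq0 hs0]
          have := psi_el_le_sSup hM hV hq hs2 hsq
          linarith
  · -- q ≤ s ≤ 2q : compare with the element at s = q
    calc Real.exp (Real.log (2*q) - Real.log s + (b - Real.log (2*q)) / s)
        ≤ 2 * Real.exp (Real.log q - Real.log q + (b - Real.log q) / q) := by
          rw [h2exp]
          apply Real.exp_le_exp.2
          rw [hlog2q]
          set L := Real.log q - b with hL
          -- need : log q - log s - (L + log 2)/s ≤ -L/q  (after moving log 2 around)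
          have hlog : 1 - q / s ≤ Real.log s - Real.log q := by
            have h := psi_log_ge (div_pos hs0 hq0)
            rw [Real.log_div (ne_of_gt hs0) (ne_of_gt hq0)] at h
            have : 1 - 1 / (s / q) = 1 - q / s := by
              rw [one_div, inv_div]
            linarith [this ▸ h]
          have h1 : L * (s - q) ≤ q * (s - q) :=
            mul_le_mul_of_nonneg_right hA (by linarith)
          have h2 : L * (s - q) / (q * s) ≤ q * (s - q) / (q * s) :=
            div_le_div_of_nonneg_right h1 (by positivity)
          have h3 : q * (s - q) / (q * s) = 1 - q / s := by field_simp
          have h4 : L * (s - q) / (q * s) = L / q - L / s := by field_simp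
          have h5 : (0:ℝ) ≤ Real.log 2 / s := by positivity
          have hLq : L / q = (Real.log q - b) / q := by rw [hL]
          have hLs : L / s = (Real.log q - b) / s := by rw [hL]
          have hsplit : (b - (Real.log 2 + Real.log q)) / s
              = -(Real.log q - b) / s - Real.log 2 / s := by ring_nf
          rw [hsplit]
          have e1 : -(Real.log q - b) / s = -(L / s) := by rw [hLs]; ring
          have e2 : (b - Real.log q) / q = -(L / q) := by rw [hLq]; ring
          rw [e1, e2]
          linarith
      _ ≤ 2 * sSup (PsiSet q M V) := by
          rw [← psi_el_eq hM hV hq0 hq0]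
          have := psi_el_le_sSup (s := q) hM hV hq hq le_rfl
          linarith

lemma psi_T_le_small {r M V : ℝ} (hM : 0 < M) (hV : 0 < V) (hr : 2 ≤ r)
    (hpos : 0 < Real.log r - Real.log (V / M ^ 2)) :
    sSup (PsiSet r M V)
      ≤ Real.exp (Real.log r - Real.log (Real.log r - Real.log (V / M ^ 2)) - 1) := by
  have hr0 : (0:ℝ) < r := lt_of_lt_of_le two_pos hr
  apply Real.sSup_le _ (Real.exp_pos _).le
  rintro y ⟨s, hs2, hsr, rfl⟩
  have hs0 : (0:ℝ) < s := lt_of_lt_of_le two_pos hs2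
  rw [psi_el_eq hM hV hr0 hs0]
  apply Real.exp_le_exp.2
  set b := Real.log (V / M ^ 2)
  set L := Real.log r - b with hL
  -- need : log r - log s + (b - log r)/s ≤ log r - log L - 1
  -- i.e. log (L/s) ≤ L/s - 1
  have h := Real.log_le_sub_one_of_pos (div_pos hpos hs0)
  rw [Real.log_div (ne_of_gt hpos) (ne_of_gt hs0)] at h
  have hbl : (b - Real.log r) / s = -(L / s) := by rw [hL]; ring
  rw [hbl]
  linarith

lemma psi_arith_B2 {b lq lp l2 p q θ : ℝ} (hp2 : 2 ≤ p) (hq0 : 0 < q)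
    (hθdef : θ = 2*q/p - 1) (hθ1 : θ ≤ 1) (hl20 : 0 < l2)
    (hlpq0 : 0 ≤ lp - lq) (hlpq2 : lp - lq ≤ l2) :
    (b - lq)/q * θ + (b - (l2 + lq))/(2*q) * (1-θ) ≤ l2 + (b - lp)/p := by
  have hp0 : (0:ℝ) < p := by linarith
  have key1 : (b - lq)/q * θ + (b - (l2 + lq))/(2*q) * (1-θ)
      = (b - lq)/p - l2 * (1-θ)/(2*q) := by
    rw [hθdef]; field_simp; ring
  have key2 : (b - lp)/p = (b - lq)/p - (lp - lq)/p := by ring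
  have key3 : (lp - lq) / p ≤ l2 := by
    have h1 : (lp - lq) / p ≤ lp - lq := div_le_self hlpq0 (by linarith)
    linarith
  have key4 : 0 ≤ l2 * (1-θ)/(2*q) :=
    div_nonneg (mul_nonneg hl20.le (by linarith)) (by linarith)
  rw [key1, key2]
  linarith

lemma psi_arith_B1 {b lq lp l2 lx lΛ p q θ x : ℝ} (hp2 : 2 ≤ p) (hq0 : 0 < q)
    (hθdef : θ = 2*q/p - 1) (hθ0 : 0 ≤ θ) (hθ1 : θ ≤ 1)
    (hqx : q * x = lq - b) (hx1 : 1 ≤ x)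
    (hl20 : 0 < l2) (hl21 : l2 ≤ 1)
    (hlpq0 : 0 ≤ lp - lq) (hlpq2 : lp - lq ≤ l2)
    (hlΛ : lq + lx ≤ lΛ)
    (hlx1 : lx ≤ x/2 - 1 + l2) (hlx2 : (x-1)/2 ≤ lx) :
    (b - lq)/q * θ + (l2 + lq - lΛ - 1)*(1-θ) ≤ l2 + (b - lp)/p := by
  have hp0 : (0:ℝ) < p := by linarith
  have hla_eq : (b - lq)/q = -x := by
    have : b - lq = -(q*x) := by linarith
    rw [this]; field_simp [hq0.ne']
  have hrhs : (b - lp)/p = -((1+θ)/2)*x - (lp - lq)/p := by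
    have h1 : (1+θ)/2 = q/p := by rw [hθdef]; field_simp; ring
    have h2 : -(q/p)*x - (lp-lq)/p = (-(q*x) - (lp-lq))/p := by ring
    rw [h1, h2, show b - lp = -(q*x) - (lp - lq) by linarith]
  have hlb_le : l2 + lq - lΛ - 1 ≤ l2 - lx - 1 := by linarith
  have hstep1 : (b - lq)/q * θ + (l2 + lq - lΛ - 1)*(1-θ)
      ≤ (-x)*θ + (l2 - lx - 1)*(1-θ) := by
    have := mul_le_mul_of_nonneg_right hlb_le (show (0:ℝ) ≤ 1-θ by linarith)
    rw [hla_eq]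
    linarith
  have hG0 : 0 ≤ x/2 + l2 - lx - 1 := by linarith
  have hGU : x/2 + l2 - lx - 1 ≤ l2 - 1/2 := by linarith
  have hlpqp : (lp - lq)/p ≤ l2/2 := by
    have h1 : (lp - lq)/p ≤ (lp - lq)/2 := div_le_div_of_nonneg_left hlpq0 two_pos hp2
    linarith
  have hid : (-x)*θ + (l2 - lx - 1)*(1-θ) - (l2 + (-((1+θ)/2)*x - (lp - lq)/p))
      = (x/2 + l2 - lx - 1) - θ*(x/2 + l2 - lx - 1) - l2 + (lp - lq)/p := by ring
  rw [hrhs]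
  linarith [hstep1, hid, mul_nonneg hθ0 hG0, hGU, hlpqp, hl21]
set_option maxHeartbeats 1000000 in
theorem psi_integers_to_reals (f : ℝ → ℝ)
    (hpos : ∀ p : ℝ, 2 ≤ p → 0 < f p)
    (hmono : MonotoneOn f (Set.Ici (2 : ℝ)))
    (hconv : ConvexOn ℝ (Set.Ioc (0 : ℝ) (1 / 2)) (fun t => Real.log (f t⁻¹)))
    (K M σ : ℝ) (hK : 0 < K) (hM : 0 < M) (hσ : 0 < σ)
    (hbound : ∀ q : ℕ, Even q → 2 ≤ q → f q ≤ K * Psi q M (σ ^ 2)) :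
    ∀ p : ℝ, 2 ≤ p → f p ≤ 2 * K * Psi p M (σ ^ 2) := by
  intro p hp
  have hp0 : (0:ℝ) < p := by linarith
  set V : ℝ := σ ^ 2 with hVdef
  have hV : (0:ℝ) < V := by positivity
  set b : ℝ := Real.log (V / M ^ 2) with hbdef
  -- the even integer q with q ≤ p < q + 2
  set n : ℕ := ⌊p / 2⌋₊ with hndef
  have hn1 : 1 ≤ n := Nat.le_floor (by push_cast; linarith)
  set Q : ℕ := 2 * n with hQdef
  have hQeven : Even Q := even_two_mul n
  have hQ2 : 2 ≤ Q := by omega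
  set q : ℝ := (Q : ℝ) with hqdef
  have hq2 : (2:ℝ) ≤ q := by rw [hqdef]; exact_mod_cast hQ2
  have hq0 : (0:ℝ) < q := by linarith
  have hqp : q ≤ p := by
    have := Nat.floor_le (show (0:ℝ) ≤ p / 2 by linarith)
    rw [hqdef, hQdef]; push_cast; linarith
  have hp2q : p ≤ 2 * q := by
    have := Nat.lt_floor_add_one (p / 2)
    have h2 : p < q + 2 := by rw [hqdef, hQdef]; push_cast; linarith
    linarith
  set θ : ℝ := 2 * q / p - 1 with hθdef
  have hθ0 : 0 ≤ θ := by
    rw [hθdef, sub_nonneg, le_div_iff₀ hp0]; linarith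
  have hθ1 : θ ≤ 1 := by
    rw [hθdef, sub_le_iff_le_add, div_le_iff₀ hp0]; linarith
  -- convexity step
  have hmemq : (q⁻¹ : ℝ) ∈ Set.Ioc (0:ℝ) (1/2) := by
    constructor
    · positivity
    · rw [inv_eq_one_div]
      exact one_div_le_one_div_of_le two_pos hq2
  have hmem2q : ((2*q)⁻¹ : ℝ) ∈ Set.Ioc (0:ℝ) (1/2) := by
    constructor
    · positivity
    · rw [inv_eq_one_div]
      apply one_div_le_one_div_of_le two_pos; linarith
  have hcomb : θ • (q⁻¹ : ℝ) + (1-θ) • ((2*q)⁻¹ : ℝ) = p⁻¹ := by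
    simp only [smul_eq_mul, hθdef]
    field_simp [hp0.ne', hq0.ne']
    ring
  have hconvle := hconv.2 hmemq hmem2q hθ0 (show (0:ℝ) ≤ 1-θ by linarith) (show θ + (1-θ) = 1 by ring)
  simp only [hcomb, inv_inv] at hconvle
  -- bounds on f at the even integers
  have hfq : f q ≤ K * (M * sSup (PsiSet q M V)) := by
    have := hbound Q hQeven hQ2
    rwa [Psi_eq, ← hqdef] at this
  have hf2q : f (2*q) ≤ K * (M * sSup (PsiSet (2*q) M V)) := by
    have := hbound (2*Q) (even_two_mul Q) (by omega)
    rw [Psi_eq] at this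
    have hc : ((2*Q : ℕ) : ℝ) = 2 * q := by push_cast; rw [hqdef]
    rwa [hc] at this
  have hfqpos : 0 < f q := hpos q hq2
  have hf2qpos : 0 < f (2*q) := hpos (2*q) (by linarith)
  set Tq := sSup (PsiSet q M V) with hTqdef
  set T2q := sSup (PsiSet (2*q) M V) with hT2qdef
  set Tp := sSup (PsiSet p M V) with hTpdef
  have hTq_pos : 0 < Tq := psi_sSup_pos hM hV hq2
  have hT2q_pos : 0 < T2q := psi_sSup_pos hM hV (by linarith)
  have hTp_pos : 0 < Tp := psi_sSup_pos hM hV hp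
  -- interpolation : f p ≤ (f q)^θ * (f (2q))^(1-θ)
  have hstep : f p ≤ (f q) ^ θ * (f (2*q)) ^ (1-θ) := by
    have h1 : Real.log (f p) ≤ θ * Real.log (f q) + (1-θ) * Real.log (f (2*q)) := by
      simpa [smul_eq_mul] using hconvle
    have h2 := Real.exp_le_exp.2 h1
    rw [Real.exp_log (hpos p hp), Real.exp_add] at h2
    rw [Real.rpow_def_of_pos hfqpos, Real.rpow_def_of_pos hf2qpos]
    calc f p ≤ Real.exp (θ * Real.log (f q)) * Real.exp ((1-θ) * Real.log (f (2*q))) := h2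
      _ = Real.exp (Real.log (f q) * θ) * Real.exp (Real.log (f (2*q)) * (1-θ)) := by
          ring_nf
  -- transfer to Psi bounds
  have hKM : (0:ℝ) < K * M := by positivity
  have hstep2 : f p ≤ (K * M) * (Tq ^ θ * T2q ^ (1-θ)) := by
    have h1 : (f q) ^ θ ≤ ((K * M) * Tq) ^ θ := by
      apply Real.rpow_le_rpow hfqpos.le _ hθ0
      rw [mul_assoc]; exact hfq
    have h2 : (f (2*q)) ^ (1-θ) ≤ ((K * M) * T2q) ^ (1-θ) := by
      apply Real.rpow_le_rpow hf2qpos.le _ (by linarith)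
      rw [mul_assoc]; exact hf2q
    have h3 : ((K * M) * Tq) ^ θ * ((K * M) * T2q) ^ (1-θ)
        = (K * M) * (Tq ^ θ * T2q ^ (1-θ)) := by
      rw [Real.mul_rpow hKM.le hTq_pos.le, Real.mul_rpow hKM.le hT2q_pos.le,
        show ∀ a b c d : ℝ, a * b * (c * d) = (a * c) * (b * d) by intros; ring,
        ← Real.rpow_add hKM, show θ + (1-θ) = 1 by ring, Real.rpow_one]
    calc f p ≤ (f q) ^ θ * (f (2*q)) ^ (1-θ) := hstep
      _ ≤ ((K * M) * Tq) ^ θ * ((K * M) * T2q) ^ (1-θ) := by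
          apply mul_le_mul h1 h2 (Real.rpow_nonneg hf2qpos.le _) (Real.rpow_nonneg (by positivity) _)
      _ = (K * M) * (Tq ^ θ * T2q ^ (1-θ)) := h3
  -- the key inequality
  have hmain : Tq ^ θ * T2q ^ (1-θ) ≤ 2 * Tp := by
    have hmono_T : Tq ≤ Tp := psi_T_mono hM hV hq2 hqp
    have hlog2pos : (0:ℝ) < Real.log 2 := Real.log_pos one_lt_two
    have hlog2le : Real.log 2 ≤ 1 := by
      linarith [Real.log_le_sub_one_of_pos (show (0:ℝ) < 2 by norm_num)]
    have hlog2q : Real.log (2*q) = Real.log 2 + Real.log q :=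
      Real.log_mul two_ne_zero hq0.ne'
    set lpq := Real.log p - Real.log q with hlpq
    have hlpq0 : 0 ≤ lpq := sub_nonneg.2 (Real.log_le_log hq0 hqp)
    have hlpq2 : lpq ≤ Real.log 2 := by
      have h := Real.log_le_log hp0 hp2q
      rw [hlog2q] at h; rw [hlpq]; linarith
    have h2q2 : (2:ℝ) ≤ 2*q := by linarith
    rcases le_or_gt (Real.log q - b) q with hA | hB
    · -- moderate regime : Psi doubles nicely
      have hdouble : T2q ≤ 2 * Tq := psi_T_double hM hV hq2 hA
      calc Tq ^ θ * T2q ^ (1-θ) ≤ Tq ^ θ * (2*Tq) ^ (1-θ) := by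
            apply mul_le_mul_of_nonneg_left
              (Real.rpow_le_rpow hT2q_pos.le hdouble (by linarith))
              (Real.rpow_nonneg hTq_pos.le _)
        _ = 2 ^ (1-θ) * Tq := by
            rw [Real.mul_rpow (by norm_num) hTq_pos.le,
              show Tq ^ θ * ((2:ℝ) ^ (1-θ) * Tq ^ (1-θ))
                = 2 ^ (1-θ) * (Tq ^ θ * Tq ^ (1-θ)) from by ring,
              ← Real.rpow_add hTq_pos, show θ + (1-θ) = 1 by ring, Real.rpow_one]
        _ ≤ 2 * Tq := by
            have h2 : (2:ℝ) ^ (1-θ) ≤ 2 ^ (1:ℝ) :=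
              Real.rpow_le_rpow_of_exponent_le one_le_two (by linarith)
            rw [Real.rpow_one] at h2
            exact mul_le_mul_of_nonneg_right h2 hTq_pos.le
        _ ≤ 2 * Tp := by linarith
    · -- extreme regime : sup for q is at s = q
      set la := (b - Real.log q)/q with hla
      have hAq : Tq ≤ Real.exp la := psi_T_le_big hM hV hq2 hB.le
      set x := (Real.log q - b)/q with hxdef
      have hqx : q * x = Real.log q - b := by rw [hxdef]; field_simp [hq0.ne']
      have hx1 : 1 ≤ x := by
        rw [hxdef, le_div_iff₀ hq0]; linarith
      have hx0 : 0 < x := by linarith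
      have hla_eq : la = -x := by rw [hla, hxdef]; ring
      obtain ⟨lb, hBb, harith⟩ : ∃ lb, T2q ≤ Real.exp lb ∧
          la*θ + lb*(1-θ) ≤ Real.log 2 + (b - Real.log p)/p := by
        rcases le_or_gt (2*q) (Real.log (2*q) - b) with h2big | h2small
        · refine ⟨(b - Real.log (2*q))/(2*q), psi_T_le_big hM hV h2q2 h2big, ?_⟩
          have hlpq0' : 0 ≤ Real.log p - Real.log q := by rw [← hlpq]; exact hlpq0
          have hlpq2' : Real.log p - Real.log q ≤ Real.log 2 := by rw [← hlpq]; exact hlpq2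
          rw [hla, hlog2q]
          exact psi_arith_B2 hp hq0 hθdef hθ1 hlog2pos hlpq0' hlpq2'
        · -- small regime for 2q
          have hΛpos : 0 < Real.log (2*q) - b := by
            rw [hlog2q]; linarith [hqx]
          refine ⟨Real.log (2*q) - Real.log (Real.log (2*q) - b) - 1,
            psi_T_le_small hM hV h2q2 hΛpos, ?_⟩
          have hx2 : x ≤ 2 := by
            rw [hxdef, div_le_iff₀ hq0]
            rw [hlog2q] at h2small; linarith
          have hqx0 : (0:ℝ) < q * x := by positivity
          have hlogmono : Real.log (q*x) ≤ Real.log (Real.log (2*q) - b) := by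
            apply Real.log_le_log hqx0
            rw [hlog2q]; linarith [hqx]
          have hlogqx : Real.log (q*x) = Real.log q + Real.log x :=
            Real.log_mul hq0.ne' hx0.ne'
          have hlx1 : Real.log x ≤ x/2 - 1 + Real.log 2 := by
            have h := Real.log_le_sub_one_of_pos (show (0:ℝ) < x/2 by linarith)
            rw [Real.log_div hx0.ne' two_ne_zero] at h
            linarith
          have hlx2 : (x-1)/2 ≤ Real.log x := by
            have h := psi_log_ge hx0
            have e : 1 - 1/x - (x-1)/2 = (x-1)*(2-x)/(2*x) := by field_simp [hx0.ne']
            have h2 : 0 ≤ (x-1)*(2-x)/(2*x) :=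
              div_nonneg (mul_nonneg (by linarith) (by linarith)) (by linarith)
            linarith
          have hlpq0' : 0 ≤ Real.log p - Real.log q := by rw [← hlpq]; exact hlpq0
          have hlpq2' : Real.log p - Real.log q ≤ Real.log 2 := by rw [← hlpq]; exact hlpq2
          have hlΛ' : Real.log q + Real.log x ≤ Real.log (Real.log 2 + Real.log q - b) := by
            rw [← hlog2q]; linarith [hlogmono, hlogqx]
          rw [hla, hlog2q]
          exact psi_arith_B1 hp hq0 hθdef hθ0 hθ1 hqx hx1 hlog2pos hlog2le hlpq0' hlpq2'
            hlΛ' hlx1 hlx2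
      calc Tq ^ θ * T2q ^ (1-θ) ≤ (Real.exp la) ^ θ * (Real.exp lb) ^ (1-θ) := by
            apply mul_le_mul (Real.rpow_le_rpow hTq_pos.le hAq hθ0)
              (Real.rpow_le_rpow hT2q_pos.le hBb (by linarith))
              (Real.rpow_nonneg hT2q_pos.le _) (Real.rpow_nonneg (Real.exp_pos _).le _)
        _ = Real.exp (la * θ + lb * (1-θ)) := by
            rw [← Real.exp_mul, ← Real.exp_mul, ← Real.exp_add]
        _ ≤ Real.exp (Real.log 2 + (b - Real.log p)/p) := Real.exp_le_exp.2 harith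
        _ = 2 * Real.exp ((b - Real.log p)/p) := by
            rw [Real.exp_add, Real.exp_log two_pos]
        _ ≤ 2 * Tp := by linarith [psi_T_lb hM hV hp]
  calc f p ≤ (K * M) * (Tq ^ θ * T2q ^ (1-θ)) := hstep2
    _ ≤ (K * M) * (2 * Tp) := by
        apply mul_le_mul_of_nonneg_left hmain hKM.le
    _ = 2 * K * Psi p M V := by rw [Psi_eq, ← hTpdef]; ring
end
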